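/- arXiv:1805.07245 — 4 statements merged into one kernel-verified Lean document; each statement's English description precedes it below -/
import Mathlib

section
/- Let X be a set of n nonzero variables and let μ be a partition of length exactly n. For any integer k with 1 ≤ k ≤ μ_n, the product s_μ(X) · p_k(X^{-1}) equals the sum over all partitions λ such that μ\λ is a k-ribbon of (−1)^{height(μ\λ)} s_λ(X). -/
/-- A function `ℕ → ℕ` is a partition if it is non-increasing with finitely
many nonzero values. -/
def IsPartitionFun (f : ℕ → ℕ) : Prop := Antitone f ∧ ∃ N, ∀ i, N ≤ i → f i = 0

/-- The cells (Ferrers diagram, 0-indexed: `(row, column)`) of a partition. -/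
def cells (f : ℕ → ℕ) : Set (ℕ × ℕ) := {c | c.2 < f c.1}

/-- The skew diagram `λ \ μ`. -/
def skewCells (mu lam : ℕ → ℕ) : Set (ℕ × ℕ) := cells lam \ cells mu

/-- Two cells are adjacent if they share an edge. -/
def AdjCell (a b : ℕ × ℕ) : Prop :=
  (a.1 = b.1 ∧ (a.2 + 1 = b.2 ∨ b.2 + 1 = a.2)) ∨
    (a.2 = b.2 ∧ (a.1 + 1 = b.1 ∨ b.1 + 1 = a.1))

/-- A set of cells is (edgewise) connected. -/
def ConnectedCells (S : Set (ℕ × ℕ)) : Prop :=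
  ∀ a ∈ S, ∀ b ∈ S, Relation.ReflTransGen (fun u v => u ∈ S ∧ v ∈ S ∧ AdjCell u v) a b

/-- `IsRibbon μ λ r` says that `μ ⊆ λ` and the skew diagram `λ \ μ` is a ribbon
(border strip) of size `r`: it is edgewise connected and contains no `2 × 2`
block of cells. -/
def IsRibbon (mu lam : ℕ → ℕ) (r : ℕ) : Prop :=
  (∀ i, mu i ≤ lam i) ∧ (skewCells mu lam).Finite ∧ (skewCells mu lam).ncard = r ∧
    ConnectedCells (skewCells mu lam) ∧
    ¬∃ c : ℕ × ℕ, c ∈ skewCells mu lam ∧ (c.1 + 1, c.2) ∈ skewCells mu lam ∧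
      (c.1, c.2 + 1) ∈ skewCells mu lam ∧ (c.1 + 1, c.2 + 1) ∈ skewCells mu lam

/-- The height of the skew diagram `λ \ μ`: one less than the number of rows it
occupies. -/
noncomputable def ribbonHeight (mu lam : ℕ → ℕ) : ℕ := {i | mu i < lam i}.ncard - 1

/-- The Schur polynomial `s_λ(x₁, …, xₙ)` for a partition given as a function
`ℕ → ℕ`, defined by the bialternant formula. -/
noncomputable def schurDN (n : ℕ) (lam : ℕ → ℕ) (x : Fin n → ℂ) : ℂ :=
  Matrix.det (Matrix.of fun i j : Fin n => x i ^ (lam (j : ℕ) + (n - 1 - (j : ℕ)))) /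
    Matrix.det (Matrix.of fun i j : Fin n => x i ^ (n - 1 - (j : ℕ)))


namespace MN

/-- beta numbers -/
def Mx (n : ℕ) (mu : ℕ → ℕ) (j : ℕ) : ℕ := mu j + (n - 1 - j)

def vOf (n k : ℕ) (mu : ℕ → ℕ) (j : ℕ) : ℕ := Mx n mu j - k

def Lof (n k : ℕ) (mu : ℕ → ℕ) (j : ℕ) : ℕ :=
  Nat.findGreatest (fun i => i < n ∧ vOf n k mu j < Mx n mu i) n

def lamOf (n k : ℕ) (mu : ℕ → ℕ) (j : ℕ) : ℕ → ℕ := fun i =>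
  if i < j then mu i
  else if i < Lof n k mu j then mu (i + 1) - 1
  else if i = Lof n k mu j then vOf n k mu j - (n - 1 - Lof n k mu j)
  else mu i

section basic
variable {n k : ℕ} {mu : ℕ → ℕ} {j : ℕ}

lemma Mx_anti (hmono : Antitone mu) {i i' : ℕ} (h : i ≤ i') (h' : i' < n) :
    Mx n mu i' ≤ Mx n mu i := by
  have := hmono h
  unfold Mx; omega

lemma Mx_strict_anti (hmono : Antitone mu) {i i' : ℕ} (h : i < i') (h' : i' < n) :
    Mx n mu i' < Mx n mu i := by
  have := hmono (le_of_lt h)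
  unfold Mx; omega

lemma mu_ge (hmono : Antitone mu) (hkmu : k ≤ mu (n - 1)) {i : ℕ} (hi : i < n) :
    k ≤ mu i :=
  le_trans hkmu (hmono (by omega))

lemma k_le_Mx (hmono : Antitone mu) (hkmu : k ≤ mu (n - 1)) (hj : j < n) :
    k ≤ Mx n mu j := by
  have := mu_ge hmono hkmu hj
  unfold Mx; omega

lemma v_add_k (hmono : Antitone mu) (hkmu : k ≤ mu (n - 1)) (hj : j < n) :
    vOf n k mu j + k = Mx n mu j := by
  have := k_le_Mx hmono hkmu hj (k := k)
  unfold vOf; omega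

lemma v_ge (hmono : Antitone mu) (hkmu : k ≤ mu (n - 1)) (hj : j < n) :
    n - 1 - j ≤ vOf n k mu j := by
  have := mu_ge hmono hkmu hj
  unfold vOf Mx; omega

variable (hk : 0 < k) (hmono : Antitone mu) (hkmu : k ≤ mu (n - 1)) (hj : j < n)
include hk hmono hkmu hj

lemma PJ : j < n ∧ vOf n k mu j < Mx n mu j := by
  have h1 := v_add_k hmono hkmu hj (k := k)
  exact ⟨hj, by omega⟩

lemma Lof_lt : Lof n k mu j < n :=
  (Nat.findGreatest_spec (P := fun i => i < n ∧ vOf n k mu j < Mx n mu i)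
    (le_of_lt hj) (PJ hk hmono hkmu hj)).1

lemma le_Lof : j ≤ Lof n k mu j :=
  Nat.le_findGreatest (P := fun i => i < n ∧ vOf n k mu j < Mx n mu i)
    (le_of_lt hj) (PJ hk hmono hkmu hj)

lemma v_lt_Mx_Lof : vOf n k mu j < Mx n mu (Lof n k mu j) :=
  (Nat.findGreatest_spec (P := fun i => i < n ∧ vOf n k mu j < Mx n mu i)
    (le_of_lt hj) (PJ hk hmono hkmu hj)).2

omit hk hmono hkmu hj in
lemma Mx_le_v {i : ℕ} (hLi : Lof n k mu j < i) (hi : i < n) : Mx n mu i ≤ vOf n k mu j := by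
  have := Nat.findGreatest_is_greatest (P := fun i => i < n ∧ vOf n k mu j < Mx n mu i)
    hLi (le_of_lt hi)
  by_contra hc
  exact this ⟨hi, by omega⟩

end basic

section lamstruct
variable {n k : ℕ} {mu : ℕ → ℕ} {j : ℕ}

lemma lamOf_lt (h : j ≤ Lof n k mu j) {i : ℕ} (hi : i < j) : lamOf n k mu j i = mu i := by
  unfold lamOf; rw [if_pos hi]

lemma lamOf_mid {i : ℕ} (h1 : j ≤ i) (h2 : i < Lof n k mu j) :
    lamOf n k mu j i = mu (i + 1) - 1 := by
  unfold lamOf; rw [if_neg (by omega), if_pos h2]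

lemma lamOf_L (h : j ≤ Lof n k mu j) :
    lamOf n k mu j (Lof n k mu j) = vOf n k mu j - (n - 1 - Lof n k mu j) := by
  unfold lamOf; rw [if_neg (by omega), if_neg (by omega), if_pos rfl]

lemma lamOf_gt {i : ℕ} (h0 : j ≤ i) (h : Lof n k mu j < i) : lamOf n k mu j i = mu i := by
  unfold lamOf; rw [if_neg (by omega), if_neg (by omega), if_neg (by omega)]

variable (hk : 0 < k) (hmono : Antitone mu) (hkmu : k ≤ mu (n - 1))
  (hlen0 : ∀ i, n ≤ i → mu i = 0) (hj : j < n)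
include hk hmono hkmu hj

lemma lamOf_beta : lamOf n k mu j (Lof n k mu j) + (n - 1 - Lof n k mu j) = vOf n k mu j := by
  have h1 := le_Lof hk hmono hkmu hj
  have h2 := v_ge hmono hkmu hj (k := k)
  rw [lamOf_L h1]
  omega

/-- the rows of the constructed ribbon -/
lemma lamOf_rows (i : ℕ) :
    lamOf n k mu j i < mu i ↔ j ≤ i ∧ i ≤ Lof n k mu j := by
  have hjL := le_Lof hk hmono hkmu hj
  have hLn := Lof_lt hk hmono hkmu hj
  rcases lt_or_ge i j with hij | hij
  · rw [lamOf_lt hjL hij]; omega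
  rcases lt_or_ge i (Lof n k mu j) with hiL | hiL
  · rw [lamOf_mid hij hiL]
    have h1 : k ≤ mu i := mu_ge hmono hkmu (by omega)
    have h2 : mu (i+1) ≤ mu i := hmono (by omega)
    omega
  rcases eq_or_lt_of_le hiL with hiL | hiL
  · rw [← hiL, lamOf_L hjL]
    have h1 := v_lt_Mx_Lof hk hmono hkmu hj
    have h2 : k ≤ mu (Lof n k mu j) := mu_ge hmono hkmu hLn
    have h3 := v_ge hmono hkmu hj (k := k)
    unfold Mx at h1
    omega
  · rw [lamOf_gt (by omega) hiL]; omega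

lemma lamOf_le (i : ℕ) : lamOf n k mu j i ≤ mu i := by
  have hjL := le_Lof hk hmono hkmu hj
  have hLn := Lof_lt hk hmono hkmu hj
  rcases lt_or_ge i j with hij | hij
  · rw [lamOf_lt hjL hij]
  rcases lt_or_ge i (Lof n k mu j) with hiL | hiL
  · exact le_of_lt ((lamOf_rows hk hmono hkmu hj i).2 ⟨hij, by omega⟩)
  rcases eq_or_lt_of_le hiL with hiL | hiL
  · exact le_of_lt ((lamOf_rows hk hmono hkmu hj i).2 ⟨hij, le_of_eq hiL.symm⟩)
  · rw [lamOf_gt (by omega) hiL]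

include hlen0 in
lemma lamOf_anti (hvalid : ∀ i, i < n → Mx n mu i ≠ vOf n k mu j) :
    Antitone (lamOf n k mu j) := by
  have hjL := le_Lof hk hmono hkmu hj
  have hLn := Lof_lt hk hmono hkmu hj
  have hvM := v_lt_Mx_Lof hk hmono hkmu hj
  have hvge := v_ge hmono hkmu hj (k := k)
  apply antitone_nat_of_succ_le
  intro i
  rcases lt_or_ge i j with h1 | h1
  · -- i + 1 ≤ j
    rw [lamOf_lt hjL h1]
    calc lamOf n k mu j (i+1) ≤ mu (i+1) := lamOf_le hk hmono hkmu hj (i+1)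
      _ ≤ mu i := hmono (by omega)
  rcases lt_or_ge i (Lof n k mu j) with h2 | h2
  · rw [lamOf_mid h1 h2]
    rcases lt_or_ge (i+1) (Lof n k mu j) with h3 | h3
    · rw [lamOf_mid (by omega) h3]
      have := hmono (show i + 1 ≤ i + 1 + 1 by omega)
      omega
    · have h4 : i + 1 = Lof n k mu j := by omega
      rw [h4, lamOf_L hjL]
      rw [← h4] at hvM ⊢
      unfold Mx at hvM
      omega
  rcases eq_or_lt_of_le h2 with h2 | h2
  · -- i = Lof n k mu j
    subst h2
    rw [lamOf_L hjL]
    rcases lt_or_ge (Lof n k mu j + 1) n with h3 | h3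
    · rw [lamOf_gt (by omega) (by omega)]
      have h4 : Mx n mu (Lof n k mu j + 1) ≤ vOf n k mu j := Mx_le_v (by omega) h3
      have h5 : Mx n mu (Lof n k mu j + 1) ≠ vOf n k mu j := hvalid _ h3
      unfold Mx at h4 h5
      omega
    · rw [lamOf_gt (by omega) (by omega), hlen0 _ h3]
      omega
  · rw [lamOf_gt (by omega) (by omega), lamOf_gt (by omega) (by omega)]
    exact hmono (by omega)

include hlen0 in
lemma lamOf_eventually_zero : ∀ i, n ≤ i → lamOf n k mu j i = 0 := by
  intro i hi
  have hLn := Lof_lt hk hmono hkmu hj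
  have hjL := le_Lof hk hmono hkmu hj
  rw [lamOf_gt (by omega) (by omega)]
  exact hlen0 i hi

end lamstruct

section skew
variable {n : ℕ} {mu lam : ℕ → ℕ}

lemma mem_skew (p : ℕ × ℕ) : p ∈ skewCells lam mu ↔ lam p.1 ≤ p.2 ∧ p.2 < mu p.1 := by
  simp only [skewCells, cells, Set.mem_diff, Set.mem_setOf_eq]
  omega

lemma skew_eq_coe (hle : ∀ i, lam i ≤ mu i) (h0 : ∀ i, n ≤ i → mu i = 0) :
    skewCells lam mu =
      ↑((Finset.range n).biUnion fun i => {i} ×ˢ Finset.Ico (lam i) (mu i)) := by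
  ext ⟨i, c⟩
  simp only [mem_skew, Finset.coe_biUnion, Finset.mem_coe, Finset.mem_range,
    Set.mem_iUnion, Finset.mem_product, Finset.mem_singleton, Finset.mem_Ico]
  constructor
  · rintro ⟨h1, h2⟩
    refine ⟨i, ?_, rfl, h1, h2⟩
    by_contra hc
    rw [h0 i (by omega)] at h2
    omega
  · rintro ⟨a, _, rfl, h1, h2⟩
    exact ⟨h1, h2⟩

lemma skew_finite (hle : ∀ i, lam i ≤ mu i) (h0 : ∀ i, n ≤ i → mu i = 0) :
    (skewCells lam mu).Finite := by
  rw [skew_eq_coe hle h0]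
  exact Finset.finite_toSet _

lemma skew_ncard (hle : ∀ i, lam i ≤ mu i) (h0 : ∀ i, n ≤ i → mu i = 0) :
    (skewCells lam mu).ncard = ∑ i ∈ Finset.range n, (mu i - lam i) := by
  rw [skew_eq_coe hle h0, Set.ncard_coe_finset]
  rw [Finset.card_biUnion]
  · apply Finset.sum_congr rfl
    intro i _
    rw [Finset.card_product, Finset.card_singleton, Nat.card_Ico, one_mul]
  · intro a _ b _ hab
    simp only [Finset.disjoint_left, Finset.mem_product, Finset.mem_singleton]
    rintro ⟨u, v⟩ ⟨rfl, _⟩ ⟨h, _⟩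
    exact hab h

/-- telescoping: the size of the skew shape plus the last beta number equals
the first beta number. -/
lemma skew_sum_beta {j L : ℕ} (hjL : j ≤ L) (hLn : L < n)
    (hlow : ∀ i, i < j → lam i = mu i)
    (hmid : ∀ i, j ≤ i → i < L → lam i = mu (i + 1) - 1)
    (hmid1 : ∀ i, j ≤ i → i < L → 1 ≤ mu (i + 1))
    (hhigh : ∀ i, L < i → lam i = mu i)
    (hle : ∀ i, lam i ≤ mu i) :
    (∑ i ∈ Finset.range n, (mu i - lam i)) + (lam L + (n - 1 - L)) =
      mu j + (n - 1 - j) := by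
  have hsub : Finset.Icc j L ⊆ Finset.range n := by
    intro i hi
    simp only [Finset.mem_Icc] at hi
    simp only [Finset.mem_range]
    omega
  rw [← Finset.sum_subset hsub (by
    intro i hi hni
    simp only [Finset.mem_Icc] at hni
    simp only [Finset.mem_range] at hi
    rcases lt_or_ge i j with h | h
    · rw [hlow i h]; omega
    · rw [hhigh i (by omega)]; omega)]
  -- now telescope over Icc j L, in ℤ
  have key : ∀ d : ℕ, j + d ≤ L →
      (∑ i ∈ Finset.Icc j (j + d), (mu i - lam i)) + (lam (j + d) + (n - 1 - (j + d))) =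
        mu j + (n - 1 - j) := by
    intro d
    induction d with
    | zero =>
      intro _
      simp only [Nat.add_zero, Finset.Icc_self, Finset.sum_singleton]
      have := hle j
      omega
    | succ d ih =>
      intro hd
      have hd' : j + d ≤ L := by omega
      have ih' := ih hd'
      rw [show j + (d + 1) = (j + d) + 1 by omega,
        Finset.sum_Icc_succ_top (by omega)]
      have h1 : lam (j + d) = mu (j + d + 1) - 1 := hmid _ (by omega) (by omega)
      have h2 : 1 ≤ mu (j + d + 1) := hmid1 _ (by omega) (by omega)
      have h3 := hle (j + d + 1)
      have h4 : j + d + 1 ≤ n - 1 := by omega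
      omega
  have := key (L - j) (by omega)
  rw [show j + (L - j) = L by omega] at this
  exact this

end skew

section paths

lemma adjCell_symm {a b : ℕ × ℕ} (h : AdjCell a b) : AdjCell b a := by
  unfold AdjCell at *
  omega

lemma adj_rows {a b : ℕ × ℕ} (h : AdjCell a b) : b.1 ≤ a.1 + 1 ∧ a.1 ≤ b.1 + 1 := by
  unfold AdjCell at h
  omega

lemma adj_vert {a b : ℕ × ℕ} (h : AdjCell a b) (hr : a.1 = b.1 + 1) : a.2 = b.2 := by
  unfold AdjCell at h
  omega

variable {S : Set (ℕ × ℕ)}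

lemma rtg_symm :
    Symmetric (Relation.ReflTransGen (fun u v : ℕ × ℕ => u ∈ S ∧ v ∈ S ∧ AdjCell u v)) :=
  fun a b h => (@Relation.ReflTransGen.stdSymm _ _ ⟨fun _ _ h => ⟨h.2.1, h.1, adjCell_symm h.2.2⟩⟩).symm a b h

lemma exists_row_between {a b : ℕ × ℕ} (ha : a ∈ S)
    (h : Relation.ReflTransGen (fun u v => u ∈ S ∧ v ∈ S ∧ AdjCell u v) a b) :
    ∀ i, a.1 ≤ i → i ≤ b.1 → ∃ c ∈ S, c.1 = i := by
  induction h with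
  | refl => exact fun i h1 h2 => ⟨a, ha, by omega⟩
  | @tail p q hpq hstep ih =>
    intro i hi1 hi2
    by_cases hip : i ≤ p.1
    · exact ih i hi1 hip
    · have hq := (adj_rows hstep.2.2).1
      exact ⟨q, hstep.2.1, by omega⟩

lemma exists_vert_pair {a b : ℕ × ℕ}
    (h : Relation.ReflTransGen (fun u v => u ∈ S ∧ v ∈ S ∧ AdjCell u v) a b) :
    ∀ i, b.1 ≤ i → i < a.1 → ∃ col, (i, col) ∈ S ∧ (i + 1, col) ∈ S := by
  induction h with
  | refl => intro i h1 h2; omega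
  | @tail p q hpq hstep ih =>
    intro i hi1 hi2
    by_cases hip : p.1 ≤ i
    · exact ih i hip hi2
    · push_neg at hip
      have hq := adj_rows hstep.2.2
      have hp1 : p.1 = i + 1 := by omega
      have hq1 : q.1 = i := by omega
      have hcol : p.2 = q.2 := adj_vert hstep.2.2 (by omega)
      refine ⟨q.2, ?_, ?_⟩
      · have : (i, q.2) = q := by rw [← hq1]
        rw [this]; exact hstep.2.1
      · have : (i + 1, q.2) = p := by rw [← hp1, ← hcol]
        rw [this]; exact hstep.1
end paths

section structure_ribbon
variable {n k : ℕ} {mu lam : ℕ → ℕ} {j L : ℕ}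

variable (hjL : j ≤ L) (hLn : L < n)
  (hrows : ∀ i, lam i < mu i ↔ j ≤ i ∧ i ≤ L)
  (hmid : ∀ i, j ≤ i → i < L → lam i = mu (i + 1) - 1)
  (hle : ∀ i, lam i ≤ mu i)
  (h0 : ∀ i, n ≤ i → mu i = 0)

include hjL hLn hrows hmid hle h0

omit hjL hLn hrows hmid hle h0 in
lemma conn_row {i c : ℕ} (hc : lam i ≤ c) : ∀ d, c + d < mu i →
    Relation.ReflTransGen
      (fun u v => u ∈ skewCells lam mu ∧ v ∈ skewCells lam mu ∧ AdjCell u v)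
      (i, c) (i, c + d) := by
  intro d
  induction d with
  | zero => intro _; exact Relation.ReflTransGen.refl
  | succ d ih =>
    intro hd
    refine Relation.ReflTransGen.tail (ih (by omega)) ?_
    refine ⟨(mem_skew _).2 ⟨by show lam i ≤ c + d; omega, by show c + d < mu i; omega⟩,
      (mem_skew _).2 ⟨by show lam i ≤ c + (d+1); omega, by show c + (d+1) < mu i; omega⟩, ?_⟩
    left
    exact ⟨rfl, Or.inl (by show c + d + 1 = c + (d+1); omega)⟩

omit h0 in
lemma conn_to_base : ∀ d c, j + d ≤ L → lam (j + d) ≤ c → c < mu (j + d) →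
    Relation.ReflTransGen
      (fun u v => u ∈ skewCells lam mu ∧ v ∈ skewCells lam mu ∧ AdjCell u v)
      (j + d, c) (j, lam j) := by
  intro d
  induction d with
  | zero =>
    intro c _ h1 h2
    simp only [Nat.add_zero] at *
    have := conn_row (lam := lam) (mu := mu) (i := j) (c := lam j)
      (le_refl _) (c - lam j) (by omega)
    rw [show lam j + (c - lam j) = c by omega] at this
    exact rtg_symm this
  | succ d ih =>
    intro c hdL h1 h2
    rw [show j + (d + 1) = j + d + 1 by omega] at h1 h2 ⊢
    have hrowi : lam (j + d + 1) < mu (j + d + 1) := (hrows _).2 ⟨by omega, by omega⟩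
    have hmidd : lam (j + d) = mu (j + d + 1) - 1 := hmid _ (by omega) (by omega)
    have hrowd : lam (j + d) < mu (j + d) := (hrows _).2 ⟨by omega, by omega⟩
    have hmu1 : 1 ≤ mu (j + d + 1) := by omega
    have step1 := conn_row (lam := lam) (mu := mu) (i := j + d + 1) (c := c) h1
      (mu (j + d + 1) - 1 - c) (by omega)
    rw [show c + (mu (j + d + 1) - 1 - c) = mu (j + d + 1) - 1 by omega] at step1
    have hmem1 : ((j + d + 1 : ℕ), mu (j + d + 1) - 1) ∈ skewCells lam mu :=
      (mem_skew _).2 ⟨by show lam (j+d+1) ≤ _; omega, by show _ < mu (j+d+1); omega⟩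
    have hmem2 : ((j + d : ℕ), mu (j + d + 1) - 1) ∈ skewCells lam mu :=
      (mem_skew _).2 ⟨by show lam (j+d) ≤ _; omega, by show _ < mu (j+d); omega⟩
    have step2 : Relation.ReflTransGen
        (fun u v => u ∈ skewCells lam mu ∧ v ∈ skewCells lam mu ∧ AdjCell u v)
        ((j + d + 1 : ℕ), mu (j + d + 1) - 1) ((j + d : ℕ), mu (j + d + 1) - 1) :=
      Relation.ReflTransGen.single
        ⟨hmem1, hmem2, Or.inr ⟨rfl, Or.inr (by show (j + d) + 1 = j + d + 1; omega)⟩⟩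
    have step3 := ih (mu (j + d + 1) - 1) (by omega) (by omega) (by omega)
    exact (step1.trans step2).trans step3

lemma structure_isRibbon (hsum : ∑ i ∈ Finset.range n, (mu i - lam i) = k) :
    IsRibbon lam mu k := by
  refine ⟨hle, skew_finite hle h0, by rw [skew_ncard hle h0]; exact hsum, ?_, ?_⟩
  · -- connectivity
    intro a ha b hb
    have hSa := (mem_skew a).1 ha
    have hSb := (mem_skew b).1 hb
    have hra : j ≤ a.1 ∧ a.1 ≤ L := (hrows a.1).1 (by omega)
    have hrb : j ≤ b.1 ∧ b.1 ≤ L := (hrows b.1).1 (by omega)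
    have ca := conn_to_base hjL hLn hrows hmid hle (a.1 - j) a.2 (by omega)
      (by rw [show j + (a.1 - j) = a.1 by omega]; omega)
      (by rw [show j + (a.1 - j) = a.1 by omega]; omega)
    have cb := conn_to_base hjL hLn hrows hmid hle (b.1 - j) b.2 (by omega)
      (by rw [show j + (b.1 - j) = b.1 by omega]; omega)
      (by rw [show j + (b.1 - j) = b.1 by omega]; omega)
    rw [show ((j + (a.1 - j) : ℕ), a.2) = a by ext <;> simp <;> omega] at ca
    rw [show ((j + (b.1 - j) : ℕ), b.2) = b by ext <;> simp <;> omega] at cb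
    exact ca.trans (rtg_symm cb)
  · -- no 2x2
    rintro ⟨c, h1, h2, h3, h4⟩
    have m1 := (mem_skew _).1 h1
    have m2 := (mem_skew _).1 h2
    have m4 := (mem_skew _).1 h4
    simp only at m1 m2 m4
    have hr1 : j ≤ c.1 ∧ c.1 ≤ L := (hrows c.1).1 (by omega)
    have hr2 : j ≤ c.1 + 1 ∧ c.1 + 1 ≤ L := (hrows (c.1 + 1)).1 (by omega)
    have := hmid c.1 (by omega) (by omega)
    omega

end structure_ribbon

section classify
variable {n k : ℕ} {mu : ℕ → ℕ}

lemma classify (hk : 0 < k) (hmono : Antitone mu) (hkmu : k ≤ mu (n - 1))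
    (hlen0 : ∀ i, n ≤ i → mu i = 0) (lam : ℕ → ℕ)
    (hp : IsPartitionFun lam) (hr : IsRibbon lam mu k) :
    ∃ j, j < n ∧ (∀ i, i < n → Mx n mu i ≠ vOf n k mu j) ∧ lam = lamOf n k mu j := by
  obtain ⟨hle, hfin, hcard, hconn, h2x2⟩ := hr
  -- the set of rows
  set Rf : Finset ℕ := (Finset.range n).filter (fun i => lam i < mu i) with hRf
  have hRmem : ∀ i, i ∈ Rf ↔ lam i < mu i := by
    intro i
    simp only [hRf, Finset.mem_filter, Finset.mem_range]
    constructor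
    · tauto
    · intro h
      refine ⟨?_, h⟩
      by_contra hc
      rw [hlen0 i (by omega)] at h
      omega
  have hRne : Rf.Nonempty := by
    by_contra hc
    rw [Finset.not_nonempty_iff_eq_empty] at hc
    have : skewCells lam mu = ∅ := by
      ext p
      simp only [mem_skew, Set.mem_empty_iff_false, iff_false]
      intro ⟨hp1, hp2⟩
      have : p.1 ∈ Rf := (hRmem p.1).2 (by omega)
      rw [hc] at this
      simp at this
    rw [this] at hcard
    simp [Set.ncard_empty] at hcard
    omega
  set j := Rf.min' hRne with hj
  set m := Rf.max' hRne with hm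
  have hjR : lam j < mu j := (hRmem j).1 (Rf.min'_mem hRne)
  have hmR : lam m < mu m := (hRmem m).1 (Rf.max'_mem hRne)
  have hjm : j ≤ m := Rf.min'_le _ (Rf.max'_mem hRne)
  have hmn : m < n := by
    by_contra hc
    rw [hlen0 m (by omega)] at hmR
    omega
  -- rows between j and m
  have hrows : ∀ i, lam i < mu i ↔ j ≤ i ∧ i ≤ m := by
    intro i
    constructor
    · intro h
      exact ⟨Rf.min'_le _ ((hRmem i).2 h), Rf.le_max' _ ((hRmem i).2 h)⟩
    · rintro ⟨h1, h2⟩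
      have haS : ((j : ℕ), lam j) ∈ skewCells lam mu := (mem_skew _).2 ⟨le_refl _, hjR⟩
      have hbS : ((m : ℕ), lam m) ∈ skewCells lam mu := (mem_skew _).2 ⟨le_refl _, hmR⟩
      obtain ⟨c, hcS, hc1⟩ := exists_row_between haS (hconn _ haS _ hbS) i h1 h2
      have := (mem_skew c).1 hcS
      rw [hc1] at this
      omega
  -- consecutive rows
  have hmid : ∀ i, j ≤ i → i < m → lam i = mu (i + 1) - 1 := by
    intro i h1 h2
    have hrow1 : lam (i + 1) < mu (i + 1) := (hrows _).2 ⟨by omega, by omega⟩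
    have hrow0 : lam i < mu i := (hrows _).2 ⟨by omega, by omega⟩
    have haS : ((i + 1 : ℕ), lam (i + 1)) ∈ skewCells lam mu :=
      (mem_skew _).2 ⟨le_refl _, hrow1⟩
    have hbS : ((i : ℕ), lam i) ∈ skewCells lam mu := (mem_skew _).2 ⟨le_refl _, hrow0⟩
    obtain ⟨col, hc1, hc2⟩ := exists_vert_pair (hconn _ haS _ hbS) i (le_refl _) (by omega)
    have m1 := (mem_skew _).1 hc1
    have m2 := (mem_skew _).1 hc2
    simp only at m1 m2
    -- lam i ≤ col < mu (i+1), so lam i ≤ mu (i+1) - 1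
    have hub : lam i < mu (i + 1) := by omega
    -- no 2x2 gives lam i + 2 > mu (i+1)
    have hlb : mu (i + 1) ≤ lam i + 1 := by
      by_contra hcon
      push_neg at hcon
      apply h2x2
      have hmono_lam : lam (i + 1) ≤ lam i := hp.1 (by omega)
      have hmono_mu : mu (i + 1) ≤ mu i := hmono (by omega)
      refine ⟨(i, lam i), (mem_skew _).2 ⟨le_refl _, by show lam i < mu i; omega⟩,
        (mem_skew _).2 ⟨by show lam (i+1) ≤ lam i; omega, by show lam i < mu (i+1); omega⟩,
        (mem_skew _).2 ⟨by show lam i ≤ lam i + 1; omega, by show lam i + 1 < mu i; omega⟩,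
        (mem_skew _).2 ⟨by show lam (i+1) ≤ lam i + 1; omega,
          by show lam i + 1 < mu (i+1); omega⟩⟩
    omega
  -- the sum identity
  have hsum : (∑ i ∈ Finset.range n, (mu i - lam i)) = k := by
    rw [← skew_ncard hle hlen0]
    exact hcard
  have hbeta := skew_sum_beta (n := n) hjm hmn
    (fun i hi => by
      have : ¬ lam i < mu i := by rw [hrows]; omega
      have := hle i
      omega)
    hmid
    (fun i h1 h2 => by
      have : lam (i + 1) < mu (i + 1) := (hrows _).2 ⟨by omega, by omega⟩
      omega)
    (fun i hi => by
      have : ¬ lam i < mu i := by rw [hrows]; omega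
      have := hle i
      omega)
    hle
  rw [hsum] at hbeta
  -- lam m + (n - 1 - m) = vOf n k mu j
  have hkM : k ≤ Mx n mu j := k_le_Mx hmono hkmu (by omega)
  have hNm : lam m + (n - 1 - m) = vOf n k mu j := by
    unfold vOf
    unfold Mx at hkM ⊢
    omega
  -- validity
  have hvalid : ∀ i, i < n → Mx n mu i ≠ vOf n k mu j := by
    intro i hi
    rcases le_or_gt i m with h | h
    · have h1 : Mx n mu m ≤ Mx n mu i := Mx_anti hmono h hmn
      have h2 : vOf n k mu j < Mx n mu m := by
        rw [← hNm]
        unfold Mx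
        omega
      omega
    · -- i > m : Mx i ≤ Mx (m+1) < vOf
      have h1 : Mx n mu i ≤ Mx n mu (m + 1) := Mx_anti hmono (by omega) hi
      have h2 : Mx n mu (m + 1) < vOf n k mu j := by
        have hlam1 : lam (m + 1) = mu (m + 1) := by
          have : ¬ lam (m + 1) < mu (m + 1) := by rw [hrows]; omega
          have := hle (m + 1)
          omega
        have hlamm : lam (m + 1) ≤ lam m := hp.1 (by omega)
        rw [← hNm]
        unfold Mx
        omega
      omega
  -- Lof j = m
  have hLm : Lof n k mu j = m := by
    have hub : m ≤ Lof n k mu j := Nat.le_findGreatest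
      (P := fun i => i < n ∧ vOf n k mu j < Mx n mu i) (by omega)
      ⟨hmn, by rw [← hNm]; unfold Mx; omega⟩
    have hLn : Lof n k mu j < n ∧ vOf n k mu j < Mx n mu (Lof n k mu j) :=
      Nat.findGreatest_spec (P := fun i => i < n ∧ vOf n k mu j < Mx n mu i)
        (le_of_lt hmn) ⟨hmn, by rw [← hNm]; unfold Mx; omega⟩
    by_contra hne
    have hgt : m < Lof n k mu j := by omega
    have h1 : Mx n mu (Lof n k mu j) ≤ Mx n mu (m + 1) := Mx_anti hmono (by omega) hLn.1
    have h2 : Mx n mu (m + 1) < vOf n k mu j := by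
      have hlam1 : lam (m + 1) = mu (m + 1) := by
        have : ¬ lam (m + 1) < mu (m + 1) := by rw [hrows]; omega
        have := hle (m + 1)
        omega
      have hlamm : lam (m + 1) ≤ lam m := hp.1 (by omega)
      rw [← hNm]
      unfold Mx
      omega
    omega
  refine ⟨j, by omega, hvalid, ?_⟩
  funext i
  rcases lt_or_ge i j with h | h
  · rw [lamOf_lt (by rw [hLm]; omega) h]
    have : ¬ lam i < mu i := by rw [hrows]; omega
    have := hle i
    omega
  rcases lt_or_ge i m with h2 | h2
  · rw [lamOf_mid h (by omega)]
    exact hmid i h h2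
  rcases eq_or_lt_of_le h2 with h2 | h2
  · rw [← h2]
    have := lamOf_L (j := j) (n := n) (k := k) (mu := mu) (by rw [hLm]; omega)
    rw [hLm] at this
    rw [this]
    have hvge : n - 1 - j ≤ vOf n k mu j := v_ge hmono hkmu (by omega)
    omega
  · rw [lamOf_gt (by omega) (by rw [hLm]; omega)]
    have : ¬ lam i < mu i := by rw [hrows]; omega
    have := hle i
    omega

end classify

section dets

lemma prod_shift {n k : ℕ} (x : Fin n → ℂ) (hx : ∀ i, x i ≠ 0) (E : ℕ → ℕ)
    (hE : ∀ i, i < n → k ≤ E i) (σ : Equiv.Perm (Fin n)) (j : Fin n) :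
    (∏ i, x (σ i) ^ E (i : ℕ)) * (x (σ j))⁻¹ ^ k =
      ∏ i, x (σ i) ^ (if (i : ℕ) = (j : ℕ) then E (i : ℕ) - k else E (i : ℕ)) := by
  rw [← Finset.mul_prod_erase Finset.univ _ (Finset.mem_univ j),
      ← Finset.mul_prod_erase Finset.univ
        (fun i => x (σ i) ^ (if (i : ℕ) = (j : ℕ) then E (i : ℕ) - k else E (i : ℕ)))
        (Finset.mem_univ j)]
  have h1 : ∀ i ∈ Finset.univ.erase j,
      x (σ i) ^ (if (i : ℕ) = (j : ℕ) then E (i : ℕ) - k else E (i : ℕ)) =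
        x (σ i) ^ E (i : ℕ) := by
    intro i hi
    rw [if_neg]
    exact fun h => (Finset.mem_erase.1 hi).1 (Fin.val_injective h)
  rw [Finset.prod_congr rfl h1, if_pos rfl,
    pow_sub₀ (x (σ j)) (hx (σ j)) (hE (j : ℕ) j.isLt), inv_pow]
  ring

lemma detA {n k : ℕ} (x : Fin n → ℂ) (hx : ∀ i, x i ≠ 0) (E : ℕ → ℕ)
    (hE : ∀ i, i < n → k ≤ E i) :
    (Matrix.det (Matrix.of fun i r : Fin n => x i ^ E (r : ℕ))) * ∑ i, (x i)⁻¹ ^ k =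
      ∑ j : Fin n, Matrix.det (Matrix.of fun i r : Fin n =>
        x i ^ (if (r : ℕ) = (j : ℕ) then E (r : ℕ) - k else E (r : ℕ))) := by
  have hrhs : ∀ j : Fin n,
      Matrix.det (Matrix.of fun i r : Fin n =>
        x i ^ (if (r : ℕ) = (j : ℕ) then E (r : ℕ) - k else E (r : ℕ))) =
      ∑ σ : Equiv.Perm (Fin n), (Equiv.Perm.sign σ : ℤ) *
        ∏ i, x (σ i) ^ (if (i : ℕ) = (j : ℕ) then E (i : ℕ) - k else E (i : ℕ)) := by
    intro j
    rw [Matrix.det_apply']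
    rfl
  rw [Matrix.det_apply', Finset.sum_mul_sum, Finset.sum_congr rfl (fun j _ => hrhs j)]
  conv_rhs => rw [Finset.sum_comm]
  apply Finset.sum_congr rfl
  intro σ _
  rw [← Equiv.sum_comp σ.symm
    (fun j => ((Equiv.Perm.sign σ : ℤ) : ℂ) *
      ∏ i, x (σ i) ^ (if (i : ℕ) = (j : ℕ) then E (i : ℕ) - k else E (i : ℕ)))]
  apply Finset.sum_congr rfl
  intro t _
  rw [← prod_shift x hx E hE σ (σ.symm t), Equiv.apply_symm_apply]
  simp only [Matrix.of_apply]
  ring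

lemma det_dup {n : ℕ} (x : Fin n → ℂ) (F : ℕ → ℕ) (i j : Fin n) (hij : i ≠ j)
    (h : F (i : ℕ) = F (j : ℕ)) :
    Matrix.det (Matrix.of fun a r : Fin n => x a ^ F (r : ℕ)) = 0 :=
  Matrix.det_zero_of_column_eq hij (fun a => by simp only [Matrix.of_apply]; rw [h])

lemma mod_helper (nu r j : ℕ) (hr : r < nu) (hj : j < nu) :
    (nu - j + r) % nu = if j ≤ r then r - j else nu - j + r := by
  rcases le_or_gt j r with h | h
  · rw [if_pos h, show nu - j + r = nu + (r - j) by omega, Nat.add_mod_left,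
      Nat.mod_eq_of_lt (by omega)]
  · rw [if_neg (by omega), Nat.mod_eq_of_lt (by omega)]

lemma detC {n k : ℕ} {mu : ℕ → ℕ} {j : ℕ} (hk : 0 < k) (hmono : Antitone mu)
    (hkmu : k ≤ mu (n - 1)) (hj : j < n)
    (hvalid : ∀ i, i < n → Mx n mu i ≠ vOf n k mu j) (x : Fin n → ℂ) :
    Matrix.det (Matrix.of fun i r : Fin n =>
        x i ^ (if (r : ℕ) = j then Mx n mu (r : ℕ) - k else Mx n mu (r : ℕ))) =
      (-1 : ℂ) ^ (Lof n k mu j - j) *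
        Matrix.det (Matrix.of fun i r : Fin n =>
          x i ^ (lamOf n k mu j (r : ℕ) + (n - 1 - (r : ℕ)))) := by
  obtain ⟨m, rfl⟩ : ∃ m, n = m + 1 := ⟨n - 1, by omega⟩
  have hjL : j ≤ Lof (m+1) k mu j := le_Lof hk hmono hkmu hj
  have hLn : Lof (m+1) k mu j < m + 1 := Lof_lt hk hmono hkmu hj
  set L := Lof (m+1) k mu j with hLdef
  set jf : Fin (m+1) := ⟨j, hj⟩ with hjf
  set hf : Fin (m+1) := ⟨L - j, by omega⟩ with hhf
  set a : Equiv.Perm (Fin (m+1)) := Equiv.addLeft jf with ha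
  set σ : Equiv.Perm (Fin (m+1)) := a * Fin.cycleRange hf * a⁻¹ with hσdef
  have hfval : (hf : ℕ) = L - j := rfl
  have ha_inv : ∀ r : Fin (m+1), ((a⁻¹ r : Fin (m+1)) : ℕ) =
      if j ≤ (r : ℕ) then (r : ℕ) - j else (m+1) - j + (r : ℕ) := by
    intro r
    have h1 : a⁻¹ r = r - jf := by
      rw [ha]
      simp [Equiv.Perm.inv_def]
      abel
    rw [h1, Fin.sub_def]
    show ((m+1) - (jf : ℕ) + (r : ℕ)) % (m+1) = _
    rw [mod_helper (m+1) (r : ℕ) j r.isLt hj]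
  have hval : ∀ w : Fin (m+1), ((a w : Fin (m+1)) : ℕ) = (j + (w : ℕ)) % (m+1) := by
    intro w
    show ((jf + w : Fin (m+1)) : ℕ) = _
    rw [Fin.add_def]
  have happ : ∀ r : Fin (m+1), σ r = a (Fin.cycleRange hf (a⁻¹ r)) := fun r => rfl
  have hσ : ∀ r : Fin (m+1), ((σ r : Fin (m+1)) : ℕ) =
      if (r : ℕ) < j then (r : ℕ) else if (r : ℕ) < L then (r : ℕ) + 1
      else if (r : ℕ) = L then j else (r : ℕ) := by
    intro r
    have huval := ha_inv r
    rcases lt_or_ge (r : ℕ) j with h1 | h1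
    · have hfix : Fin.cycleRange hf (a⁻¹ r) = a⁻¹ r :=
        Fin.cycleRange_of_gt (by rw [Fin.lt_def, hfval, huval, if_neg (by omega)]; omega)
      rw [happ r, hfix, Equiv.Perm.inv_def, Equiv.apply_symm_apply, if_pos h1]
    rcases lt_or_ge (r : ℕ) L with h2 | h2
    · have hult : a⁻¹ r < hf := by
        rw [Fin.lt_def, hfval, huval, if_pos h1]; omega
      have hne : a⁻¹ r ≠ Fin.last m := by
        intro hc
        have : ((a⁻¹ r : Fin (m+1)) : ℕ) = m := by rw [hc]; rfl
        rw [huval, if_pos h1] at this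
        omega
      have hstep : Fin.cycleRange hf (a⁻¹ r) = a⁻¹ r + 1 := Fin.cycleRange_of_lt hult
      rw [happ r, hstep, hval, Fin.val_add_one, if_neg hne, huval, if_pos h1,
        Nat.mod_eq_of_lt (by omega), if_neg (by omega), if_pos h2]
      omega
    rcases eq_or_lt_of_le h2 with h3 | h3
    · have hueq : a⁻¹ r = hf := by
        apply Fin.ext
        rw [hfval, huval, if_pos h1]
        omega
      have hzero : Fin.cycleRange hf (a⁻¹ r) = 0 := Fin.cycleRange_of_eq hueq
      rw [happ r, hzero, hval, if_neg (by omega), if_neg (by omega), if_pos (by omega)]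
      simp only [Fin.val_zero]
      rw [Nat.add_zero, Nat.mod_eq_of_lt (by omega)]
    · have hfix : Fin.cycleRange hf (a⁻¹ r) = a⁻¹ r :=
        Fin.cycleRange_of_gt (by rw [Fin.lt_def, hfval, huval, if_pos h1]; omega)
      rw [happ r, hfix, Equiv.Perm.inv_def, Equiv.apply_symm_apply, if_neg (by omega), if_neg (by omega),
        if_neg (by omega)]
  have hconj : ∀ s t : ℤˣ, s * t * s⁻¹ = t := by
    intro s t
    rw [mul_comm s t, mul_assoc]
    simp
  have hsign : ((Equiv.Perm.sign σ : ℤ) : ℂ) = (-1) ^ (L - j) := by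
    rw [hσdef, map_mul, map_mul, map_inv, hconj, Fin.sign_cycleRange, hfval]
    push_cast
    ring
  have hcol : ∀ r : Fin (m+1),
      (if ((σ r : Fin (m+1)) : ℕ) = j then Mx (m+1) mu ((σ r : Fin (m+1)) : ℕ) - k
        else Mx (m+1) mu ((σ r : Fin (m+1)) : ℕ)) =
      lamOf (m+1) k mu j (r : ℕ) + ((m+1) - 1 - (r : ℕ)) := by
    intro r
    rcases lt_or_ge (r : ℕ) j with h1 | h1
    · rw [hσ r, if_pos h1, if_neg (show ¬((r : ℕ) = j) by omega), lamOf_lt hjL h1]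
      unfold Mx
      omega
    rcases lt_or_ge (r : ℕ) L with h2 | h2
    · rw [hσ r, if_neg (show ¬((r : ℕ) < j) by omega), if_pos h2,
        if_neg (show ¬((r : ℕ) + 1 = j) by omega), lamOf_mid h1 h2]
      have hmuge : k ≤ mu ((r : ℕ) + 1) := mu_ge hmono hkmu (by omega)
      unfold Mx
      omega
    rcases eq_or_lt_of_le h2 with h3 | h3
    · rw [hσ r, if_neg (show ¬((r : ℕ) < j) by omega),
        if_neg (show ¬((r : ℕ) < L) by omega), if_pos (show (r : ℕ) = L by omega),
        if_pos rfl]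
      have hbeta := lamOf_beta hk hmono hkmu hj
      rw [← hLdef] at hbeta
      unfold vOf at hbeta
      rw [show (r : ℕ) = L by omega]
      omega
    · rw [hσ r, if_neg (show ¬((r : ℕ) < j) by omega),
        if_neg (show ¬((r : ℕ) < L) by omega), if_neg (show ¬((r : ℕ) = L) by omega),
        if_neg (show ¬((r : ℕ) = j) by omega),
        lamOf_gt (by omega) (by rw [← hLdef]; omega)]
      unfold Mx
      omega
  have hM : (Matrix.of fun i r : Fin (m+1) =>
      x i ^ (if (r : ℕ) = j then Mx (m+1) mu (r : ℕ) - k else Mx (m+1) mu (r : ℕ))).submatrix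
        id σ =
      Matrix.of fun i r : Fin (m+1) =>
        x i ^ (lamOf (m+1) k mu j (r : ℕ) + ((m+1) - 1 - (r : ℕ))) := by
    ext i r
    simp only [Matrix.submatrix_apply, Matrix.of_apply, id]
    rw [hcol r]
  have hperm := Matrix.det_permute' σ (Matrix.of fun i r : Fin (m+1) =>
      x i ^ (if (r : ℕ) = j then Mx (m+1) mu (r : ℕ) - k else Mx (m+1) mu (r : ℕ)))
  rw [hM] at hperm
  rw [hperm, hsign, ← mul_assoc, ← mul_pow]
  norm_num

end dets

end MN

open MN

/-- Let `X` consist of `n` nonzero variables and let `μ` be a partition of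
length exactly `n`. For `1 ≤ k ≤ μ_n`,
`s_μ(X) · p_k(X⁻¹) = ∑_{λ : μ\λ is a k-ribbon} (-1)^{height(μ\λ)} s_λ(X)`. -/
theorem schur_times_inverse_power_sum (n k : ℕ) (hk : 0 < k) (mu : ℕ → ℕ)
    (hmu : IsPartitionFun mu) (hlen0 : ∀ i, n ≤ i → mu i = 0)
    (hlen1 : 0 < n → 0 < mu (n - 1)) (hkmu : k ≤ mu (n - 1))
    (x : Fin n → ℂ) (hx : ∀ i, x i ≠ 0) :
    schurDN n mu x * ∑ i, (x i)⁻¹ ^ k =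
      ∑ᶠ (lam : ℕ → ℕ) (_ : IsPartitionFun lam ∧ IsRibbon lam mu k),
        ((-1 : ℂ) ^ ribbonHeight lam mu) * schurDN n lam x := by
  classical
  rcases Nat.eq_zero_or_pos n with hn | hn
  · exfalso
    rw [hn] at hkmu
    rw [hlen0 0 (by omega)] at hkmu
    omega
  obtain ⟨hmono, -⟩ := hmu
  set V : Finset ℕ := (Finset.range n).filter
    (fun j => ∀ i ∈ Finset.range n, Mx n mu i ≠ vOf n k mu j) with hV
  have hVmem : ∀ j, j ∈ V ↔ j < n ∧ ∀ i, i < n → Mx n mu i ≠ vOf n k mu j := by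
    intro j
    simp only [hV, Finset.mem_filter, Finset.mem_range]
  have hinj : ∀ j1 ∈ V, ∀ j2 ∈ V, lamOf n k mu j1 = lamOf n k mu j2 → j1 = j2 := by
    intro j1 h1 j2 h2 he
    have hj1 := ((hVmem j1).1 h1).1
    have hj2 := ((hVmem j2).1 h2).1
    have r11 : lamOf n k mu j1 j1 < mu j1 :=
      (lamOf_rows hk hmono hkmu hj1 j1).2 ⟨le_refl _, le_Lof hk hmono hkmu hj1⟩
    have r22 : lamOf n k mu j2 j2 < mu j2 :=
      (lamOf_rows hk hmono hkmu hj2 j2).2 ⟨le_refl _, le_Lof hk hmono hkmu hj2⟩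
    rw [he] at r11
    rw [← he] at r22
    have g1 := ((lamOf_rows hk hmono hkmu hj2 j1).1 r11).1
    have g2 := ((lamOf_rows hk hmono hkmu hj1 j2).1 r22).1
    omega
  have hribbon : ∀ j, j < n → (∀ i, i < n → Mx n mu i ≠ vOf n k mu j) →
      IsRibbon (lamOf n k mu j) mu k := by
    intro j hjn hvalid
    have hjL := le_Lof hk hmono hkmu hjn
    have hLn := Lof_lt hk hmono hkmu hjn
    have hsum : ∑ i ∈ Finset.range n, (mu i - lamOf n k mu j i) = k := by
      have hb := skew_sum_beta (n := n) (lam := lamOf n k mu j) hjL hLn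
        (fun i hi => lamOf_lt hjL hi)
        (fun i hi1 hi2 => lamOf_mid hi1 hi2)
        (fun i hi1 hi2 => by
          have := mu_ge hmono hkmu (show i + 1 < n by omega)
          omega)
        (fun i hi => lamOf_gt (by omega) hi)
        (lamOf_le hk hmono hkmu hjn)
      have hbeta := lamOf_beta hk hmono hkmu hjn
      have hkM := k_le_Mx hmono hkmu hjn (k := k)
      unfold vOf at hbeta
      unfold Mx at hbeta hkM
      omega
    exact structure_isRibbon hjL hLn (lamOf_rows hk hmono hkmu hjn)
      (fun i hi1 hi2 => lamOf_mid hi1 hi2) (lamOf_le hk hmono hkmu hjn) hlen0 hsum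
  have hset : {lam : ℕ → ℕ | IsPartitionFun lam ∧ IsRibbon lam mu k} =
      ↑(V.image (lamOf n k mu)) := by
    ext lam
    simp only [Set.mem_setOf_eq, Finset.coe_image, Set.mem_image, Finset.mem_coe]
    constructor
    · rintro ⟨hp, hr⟩
      obtain ⟨j, hjn, hvalid, rfl⟩ := classify hk hmono hkmu hlen0 lam hp hr
      exact ⟨j, (hVmem j).2 ⟨hjn, hvalid⟩, rfl⟩
    · rintro ⟨j, hjV, rfl⟩
      obtain ⟨hjn, hvalid⟩ := (hVmem j).1 hjV
      refine ⟨⟨lamOf_anti hk hmono hkmu hlen0 hjn hvalid,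
        ⟨n, lamOf_eventually_zero hk hmono hkmu hlen0 hjn⟩⟩, hribbon j hjn hvalid⟩
  have hheight : ∀ j ∈ V, ribbonHeight (lamOf n k mu j) mu = Lof n k mu j - j := by
    intro j hjV
    obtain ⟨hjn, hvalid⟩ := (hVmem j).1 hjV
    have hjL := le_Lof hk hmono hkmu hjn
    unfold ribbonHeight
    have hsx : {i | lamOf n k mu j i < mu i} = ↑(Finset.Icc j (Lof n k mu j)) := by
      ext i
      simp only [Set.mem_setOf_eq, Finset.coe_Icc, Set.mem_Icc]
      exact lamOf_rows hk hmono hkmu hjn i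
    rw [hsx, Set.ncard_coe_finset, Nat.card_Icc]
    omega
  have hRHS : (∑ᶠ (lam : ℕ → ℕ) (_ : IsPartitionFun lam ∧ IsRibbon lam mu k),
      ((-1 : ℂ) ^ ribbonHeight lam mu) * schurDN n lam x) =
      ∑ j ∈ V, ((-1 : ℂ) ^ (Lof n k mu j - j)) * schurDN n (lamOf n k mu j) x := by
    have h1 : (∑ᶠ (lam : ℕ → ℕ) (_ : IsPartitionFun lam ∧ IsRibbon lam mu k),
        ((-1 : ℂ) ^ ribbonHeight lam mu) * schurDN n lam x) =
        ∑ᶠ lam ∈ {lam : ℕ → ℕ | IsPartitionFun lam ∧ IsRibbon lam mu k},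
          ((-1 : ℂ) ^ ribbonHeight lam mu) * schurDN n lam x := rfl
    rw [h1, hset, finsum_mem_coe_finset, Finset.sum_image hinj]
    exact Finset.sum_congr rfl (fun j hj => by rw [hheight j hj])
  rw [hRHS]
  -- now the LHS
  set D : ℂ := Matrix.det (Matrix.of fun i r : Fin n => x i ^ (n - 1 - (r : ℕ))) with hD
  set g : ℕ → ℂ := fun jn => Matrix.det (Matrix.of fun i r : Fin n =>
    x i ^ (if (r : ℕ) = jn then Mx n mu (r : ℕ) - k else Mx n mu (r : ℕ))) / D with hg
  have hms : schurDN n mu x =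
      Matrix.det (Matrix.of fun i r : Fin n => x i ^ (Mx n mu (r : ℕ))) / D := rfl
  rw [hms, div_mul_eq_mul_div,
    detA x hx (Mx n mu) (fun i hi => k_le_Mx hmono hkmu hi), Finset.sum_div]
  have hfin2range : (∑ jf : Fin n, Matrix.det (Matrix.of fun i r : Fin n =>
      x i ^ (if (r : ℕ) = (jf : ℕ) then Mx n mu (r : ℕ) - k else Mx n mu (r : ℕ))) / D) =
      ∑ jn ∈ Finset.range n, g jn := by
    rw [← Fin.sum_univ_eq_sum_range g n]
  rw [hfin2range]
  have hVsub : V ⊆ Finset.range n := by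
    intro j hj
    exact Finset.mem_range.2 ((hVmem j).1 hj).1
  rw [← Finset.sum_subset hVsub (by
    intro jn hjn hnV
    have hjn' := Finset.mem_range.1 hjn
    have : ¬ ∀ i, i < n → Mx n mu i ≠ vOf n k mu jn := fun h => hnV ((hVmem jn).2 ⟨hjn', h⟩)
    push_neg at this
    obtain ⟨i, hi, hieq⟩ := this
    have hkM := k_le_Mx hmono hkmu hjn' (k := k)
    have hine : i ≠ jn := by
      intro hc
      rw [hc] at hieq
      unfold vOf at hieq
      omega
    have hdet := det_dup x (fun i => if i = jn then Mx n mu i - k else Mx n mu i)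
      ⟨i, hi⟩ ⟨jn, hjn'⟩ (by simp [Fin.ext_iff]; omega) (by
        show (if i = jn then Mx n mu i - k else Mx n mu i) =
          (if jn = jn then Mx n mu jn - k else Mx n mu jn)
        rw [if_neg hine, if_pos rfl]
        unfold vOf at hieq
        omega)
    rw [hg]
    simp only []
    rw [hdet, zero_div])]
  apply Finset.sum_congr rfl
  intro j hjV
  obtain ⟨hjn, hvalid⟩ := (hVmem j).1 hjV
  rw [hg]
  simp only []
  rw [detC hk hmono hkmu hjn hvalid x, mul_div_assoc]
  rfl
end

section
/- Fix a positive integer k and a partition λ contained in the rectangle ⟨m^n⟩. Then the number of partitions μ such that λ\μ is a k-ribbon is at most min{m,n}, and likewise the number of partitions μ ⊂ ⟨m^n⟩ such that μ\λ is a k-ribbon is at most min{m,n}. -/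
namespace RibbonPf

lemma mem_skew {a b : ℕ → ℕ} {c : ℕ × ℕ} :
    c ∈ skewCells a b ↔ a c.1 ≤ c.2 ∧ c.2 < b c.1 := by
  simp only [skewCells, cells, Set.mem_diff, Set.mem_setOf_eq, not_lt]
  tauto

lemma mem_skew' {a b : ℕ → ℕ} {i j : ℕ} :
    (i, j) ∈ skewCells a b ↔ a i ≤ j ∧ j < b i := mem_skew

noncomputable def conj (f : ℕ → ℕ) (j : ℕ) : ℕ := sInf {i | f i ≤ j}

lemma lt_conj_iff {f : ℕ → ℕ} (hf : IsPartitionFun f) {i j : ℕ} :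
    i < conj f j ↔ j < f i := by
  obtain ⟨hmono, N, hN⟩ := hf
  have e : conj f j = sInf {i | f i ≤ j} := rfl
  constructor
  · intro h
    by_contra hc
    have h3 : sInf {i | f i ≤ j} ≤ i := Nat.sInf_le (show f i ≤ j by omega)
    omega
  · intro h
    by_contra hc
    push_neg at hc
    have hne : {i | f i ≤ j}.Nonempty := ⟨N, by simp [hN N le_rfl]⟩
    have hmem := Nat.sInf_mem hne
    have h2 : f i ≤ f (sInf {i | f i ≤ j}) := by rw [← e]; exact hmono hc
    simp only [Set.mem_setOf_eq] at hmem
    omega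

lemma conj_eq_zero {f : ℕ → ℕ} {m j : ℕ} (hm : ∀ i, f i ≤ m) (hj : m ≤ j) : conj f j = 0 :=
  Nat.le_zero.mp (Nat.sInf_le (show f 0 ≤ j from le_trans (hm 0) hj))

lemma conj_partition {f : ℕ → ℕ} (hf : IsPartitionFun f) : IsPartitionFun (conj f) := by
  obtain ⟨hmono, N, hN⟩ := hf
  constructor
  · intro j j' hjj
    have hne : (sInf {i | f i ≤ j}) ∈ {i | f i ≤ j} := Nat.sInf_mem ⟨N, by simp [hN N le_rfl]⟩
    simp only [Set.mem_setOf_eq] at hne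
    have e : conj f j = sInf {i | f i ≤ j} := rfl
    exact Nat.sInf_le (show f (conj f j) ≤ j' by rw [e]; omega)
  · exact ⟨f 0, fun j hj => Nat.le_zero.mp (Nat.sInf_le (show f 0 ≤ j from hj))⟩

lemma conj_mono {a b : ℕ → ℕ} (hb : IsPartitionFun b) (hab : ∀ i, a i ≤ b i) (j : ℕ) :
    conj a j ≤ conj b j := by
  obtain ⟨_, N, hN⟩ := hb
  have hmem : (sInf {i | b i ≤ j}) ∈ {i | b i ≤ j} := Nat.sInf_mem ⟨N, by simp [hN N le_rfl]⟩
  exact Nat.sInf_le (le_trans (hab _) hmem)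

lemma conj_inj {f g : ℕ → ℕ} (hf : IsPartitionFun f) (hg : IsPartitionFun g)
    (h : conj f = conj g) : f = g := by
  funext i
  by_contra hne
  rcases Nat.lt_or_ge (f i) (g i) with hlt | hge
  · have h1 := (lt_conj_iff hg).mpr hlt
    rw [← h] at h1
    have := (lt_conj_iff hf).mp h1
    omega
  · have hlt : g i < f i := by omega
    have h1 := (lt_conj_iff hf).mpr hlt
    rw [h] at h1
    have := (lt_conj_iff hg).mp h1
    omega

lemma mem_skew_conj {mu lam : ℕ → ℕ} (hmu : IsPartitionFun mu) (hlam : IsPartitionFun lam)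
    {c : ℕ × ℕ} : c ∈ skewCells (conj mu) (conj lam) ↔ c.swap ∈ skewCells mu lam := by
  rw [mem_skew, mem_skew]
  simp only [Prod.fst_swap, Prod.snd_swap]
  have h1 : c.2 < conj mu c.1 ↔ c.1 < mu c.2 := lt_conj_iff hmu
  have h2 : c.2 < conj lam c.1 ↔ c.1 < lam c.2 := lt_conj_iff hlam
  omega

lemma skew_conj_eq {mu lam : ℕ → ℕ} (hmu : IsPartitionFun mu) (hlam : IsPartitionFun lam) :
    skewCells (conj mu) (conj lam) = Prod.swap '' skewCells mu lam := by
  ext c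
  rw [mem_skew_conj hmu hlam]
  constructor
  · intro h; exact ⟨c.swap, h, Prod.swap_swap c⟩
  · rintro ⟨x, hx, rfl⟩; simpa using hx

lemma adj_swap {a b : ℕ × ℕ} (h : AdjCell a b) : AdjCell a.swap b.swap := by
  simp only [AdjCell, Prod.fst_swap, Prod.snd_swap] at h ⊢
  tauto

lemma ribbon_conj {mu lam : ℕ → ℕ} {r : ℕ} (hmu : IsPartitionFun mu) (hlam : IsPartitionFun lam)
    (h : IsRibbon mu lam r) : IsRibbon (conj mu) (conj lam) r := by
  obtain ⟨hle, hfin, hcard, hconn, h2⟩ := h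
  have E := skew_conj_eq hmu hlam
  refine ⟨fun j => conj_mono hlam hle j, ?_, ?_, ?_, ?_⟩
  · rw [E]; exact hfin.image _
  · rw [E, Set.ncard_image_of_injOn (Prod.swap_injective.injOn)]; exact hcard
  · intro a ha b hb
    rw [E] at ha hb
    obtain ⟨a', ha', rfl⟩ := ha
    obtain ⟨b', hb', rfl⟩ := hb
    refine Relation.ReflTransGen.lift Prod.swap ?_ _ _ (hconn a' ha' b' hb')
    rintro u v ⟨hu, hv, huv⟩
    exact ⟨by rw [E]; exact ⟨u, hu, rfl⟩, by rw [E]; exact ⟨v, hv, rfl⟩, adj_swap huv⟩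
  · rintro ⟨c, h1', h2', h3', h4'⟩
    rw [mem_skew_conj hmu hlam] at h1' h2' h3' h4'
    exact h2 ⟨(c.2, c.1), h1', h3', h2', h4'⟩

section Paths
variable {S : Set (ℕ × ℕ)}

lemma exists_row_of_path {a b : ℕ × ℕ} (ha : a ∈ S) {i : ℕ} (h1 : a.1 ≤ i)
    (h : Relation.ReflTransGen (fun u v => u ∈ S ∧ v ∈ S ∧ AdjCell u v) a b) :
    i ≤ b.1 → ∃ c ∈ S, c.1 = i := by
  induction h with
  | refl => exact fun h2 => ⟨a, ha, by omega⟩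
  | @tail b c hab hbc ih =>
    intro h2
    obtain ⟨hbS, hcS, hadj⟩ := hbc
    rcases le_or_gt i b.1 with hle | hlt
    · exact ih hle
    · have hc1 : c.1 ≤ b.1 + 1 := by
        rcases hadj with ⟨h', _⟩ | ⟨_, h' | h'⟩ <;> omega
      exact ⟨c, hcS, by omega⟩

lemma exists_vert_of_path {a b : ℕ × ℕ} {i : ℕ} (h1 : a.1 ≤ i)
    (h : Relation.ReflTransGen (fun u v => u ∈ S ∧ v ∈ S ∧ AdjCell u v) a b) :
    i < b.1 → ∃ j, (i, j) ∈ S ∧ (i + 1, j) ∈ S := by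
  induction h with
  | refl => intro h2; omega
  | @tail b c hab hbc ih =>
    intro h2
    obtain ⟨hbS, hcS, hadj⟩ := hbc
    rcases Nat.lt_or_ge i b.1 with hlt | hge
    · exact ih hlt
    · rcases hadj with ⟨h', _⟩ | ⟨hcol, h' | h'⟩
      · omega
      · refine ⟨b.2, ?_, ?_⟩
        · have e : (i, b.2) = b := Prod.ext (show i = b.1 by omega) rfl
          rwa [e]
        · have e : (i + 1, b.2) = c := Prod.ext (show i + 1 = c.1 by omega) (show b.2 = c.2 from hcol)
          rwa [e]
      · omega
end Paths

lemma cell_mem {a b : ℕ → ℕ} {i : ℕ} (hi : a i < b i) : (i, a i) ∈ skewCells a b :=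
  mem_skew'.mpr ⟨le_rfl, hi⟩

lemma R_finite {a b : ℕ → ℕ} (hb : IsPartitionFun b) : {i | a i < b i}.Finite := by
  obtain ⟨_, N, hN⟩ := hb
  refine (Set.finite_Iio N).subset (fun i hi => ?_)
  simp only [Set.mem_setOf_eq] at hi
  by_contra h
  have := hN i (by simpa [Set.mem_Iio] using h)
  omega

lemma R_nonempty {a b : ℕ → ℕ} {r : ℕ} (h : IsRibbon a b r) (hr : 0 < r) :
    {i | a i < b i}.Nonempty := by
  have hS : (skewCells a b).Nonempty := Set.nonempty_of_ncard_ne_zero (by rw [h.2.2.1]; omega)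
  obtain ⟨c, hc⟩ := hS
  have := mem_skew.mp hc
  exact ⟨c.1, by simp only [Set.mem_setOf_eq]; omega⟩

lemma R_interval {a b : ℕ → ℕ} {r : ℕ} (h : IsRibbon a b r) {i j t : ℕ}
    (hi : a i < b i) (hj : a j < b j) (h1 : i ≤ t) (h2 : t ≤ j) : a t < b t := by
  have hc := h.2.2.2.1 (i, a i) (cell_mem hi) (j, a j) (cell_mem hj)
  obtain ⟨c, hcS, hct⟩ := exists_row_of_path (cell_mem hi) h1 hc h2
  have hm := mem_skew.mp hcS
  subst hct
  omega

lemma ribbon_step {a b : ℕ → ℕ} {r : ℕ} (ha : IsPartitionFun a) (hb : IsPartitionFun b)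
    (h : IsRibbon a b r) {i : ℕ} (h1 : a i < b i) (h2 : a (i + 1) < b (i + 1)) :
    a i + 1 = b (i + 1) := by
  have hc := h.2.2.2.1 (i, a i) (cell_mem h1) (i + 1, a (i + 1)) (cell_mem h2)
  obtain ⟨j, hj1, hj2⟩ := exists_vert_of_path (le_refl i) hc (Nat.lt_succ_self i)
  rw [mem_skew'] at hj1 hj2
  by_contra hne
  have hlt : a i + 1 < b (i + 1) := by omega
  have hba : a (i + 1) ≤ a i := ha.1 (show i ≤ i + 1 by omega)
  have hbb : b (i + 1) ≤ b i := hb.1 (show i ≤ i + 1 by omega)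
  exact h.2.2.2.2 ⟨(i, a i), mem_skew'.mpr ⟨le_rfl, h1⟩,
    (mem_skew'.mpr ⟨by omega, by omega⟩ : (i + 1, a i) ∈ skewCells a b),
    (mem_skew'.mpr ⟨by omega, by omega⟩ : (i, a i + 1) ∈ skewCells a b),
    (mem_skew'.mpr ⟨by omega, by omega⟩ : (i + 1, a i + 1) ∈ skewCells a b)⟩

lemma skew_subset_inner {a a' b : ℕ → ℕ} (h : ∀ i, a' i ≤ a i) :
    skewCells a b ⊆ skewCells a' b := fun c hc => by
  rw [mem_skew] at hc ⊢; exact ⟨le_trans (h c.1) hc.1, hc.2⟩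

lemma skew_subset_outer {a b b' : ℕ → ℕ} (h : ∀ i, b i ≤ b' i) :
    skewCells a b ⊆ skewCells a b' := fun c hc => by
  rw [mem_skew] at hc ⊢; exact ⟨hc.1, lt_of_lt_of_le hc.2 (h c.1)⟩

lemma eq_of_skew_eq_inner {a a' b : ℕ → ℕ} (h1 : ∀ i, a i ≤ b i) (h2 : ∀ i, a' i ≤ b i)
    (hS : skewCells a b = skewCells a' b) : a = a' := by
  have key : ∀ x x' : ℕ → ℕ, (∀ i, x i ≤ b i) → (∀ i, x' i ≤ b i) →
      skewCells x b = skewCells x' b → ∀ i, x' i ≤ x i := by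
    intro x x' hx hx' hE i
    rcases Nat.lt_or_ge (x i) (b i) with hlt | hge
    · have hm : (i, x i) ∈ skewCells x' b := hE ▸ cell_mem hlt
      exact (mem_skew'.mp hm).1
    · have := hx i; have := hx' i; omega
  funext i
  exact le_antisymm (key a' a h2 h1 hS.symm i) (key a a' h1 h2 hS i)

lemma eq_of_skew_eq_outer {a b b' : ℕ → ℕ} (h1 : ∀ i, a i ≤ b i) (h2 : ∀ i, a i ≤ b' i)
    (hS : skewCells a b = skewCells a b') : b = b' := by
  have key : ∀ x x' : ℕ → ℕ, (∀ i, a i ≤ x i) → (∀ i, a i ≤ x' i) →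
      skewCells a x = skewCells a x' → ∀ i, x i ≤ x' i := by
    intro x x' hx hx' hE i
    rcases Nat.lt_or_ge (a i) (x i) with hlt | hge
    · have hm : (i, x i - 1) ∈ skewCells a x := mem_skew'.mpr ⟨by omega, by omega⟩
      have := (mem_skew'.mp (hE ▸ hm)).2
      omega
    · have := hx i; have := hx' i; omega
  funext i
  exact le_antisymm (key b b' h1 h2 hS i) (key b' b h2 h1 hS.symm i)

lemma rem_eq_of_le {mu mu' lam : ℕ → ℕ} {k : ℕ}
    (h : IsRibbon mu lam k) (h' : IsRibbon mu' lam k) (hle : ∀ i, mu' i ≤ mu i) : mu = mu' := by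
  have heq : skewCells mu lam = skewCells mu' lam :=
    Set.eq_of_subset_of_ncard_le (skew_subset_inner hle) (by rw [h.2.2.1, h'.2.2.1]) h'.2.1
  exact eq_of_skew_eq_inner h.1 h'.1 heq

lemma add_eq_of_le {mu mu' lam : ℕ → ℕ} {k : ℕ}
    (h : IsRibbon lam mu k) (h' : IsRibbon lam mu' k) (hle : ∀ i, mu i ≤ mu' i) : mu = mu' := by
  have heq : skewCells lam mu = skewCells lam mu' :=
    Set.eq_of_subset_of_ncard_le (skew_subset_outer hle) (by rw [h.2.2.1, h'.2.2.1]) h'.2.1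
  exact eq_of_skew_eq_outer h.1 h'.1 heq

lemma rem_unique {mu mu' lam : ℕ → ℕ} {k : ℕ} (hk : 0 < k)
    (hmu : IsPartitionFun mu) (hmu' : IsPartitionFun mu') (hlam : IsPartitionFun lam)
    (h : IsRibbon mu lam k) (h' : IsRibbon mu' lam k)
    (htop : sInf {i | mu i < lam i} = sInf {i | mu' i < lam i}) : mu = mu' := by
  have main : ∀ x x' : ℕ → ℕ, IsPartitionFun x → IsPartitionFun x' →
      ∀ _hx : IsRibbon x lam k, ∀ _hx' : IsRibbon x' lam k,
      sInf {i | x i < lam i} = sInf {i | x' i < lam i} →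
      sSup {i | x i < lam i} ≤ sSup {i | x' i < lam i} →
      x' (sSup {i | x i < lam i}) ≤ x (sSup {i | x i < lam i}) →
      ∀ i, x' i ≤ x i := by
    intro x x' hxp hxp' hx hx' hinf hsup hboundary i
    have hRne := R_nonempty hx hk
    have hR'ne := R_nonempty hx' hk
    have hRfin : {i | x i < lam i}.Finite := R_finite hlam
    have hR'fin : {i | x' i < lam i}.Finite := R_finite hlam
    have hi0 : x (sInf {i | x i < lam i}) < lam (sInf {i | x i < lam i}) := Nat.sInf_mem hRne
    have hi1 : x (sSup {i | x i < lam i}) < lam (sSup {i | x i < lam i}) :=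
      Nat.sSup_mem hRne hRfin.bddAbove
    have hi0' : x' (sInf {i | x' i < lam i}) < lam (sInf {i | x' i < lam i}) := Nat.sInf_mem hR'ne
    have hi1' : x' (sSup {i | x' i < lam i}) < lam (sSup {i | x' i < lam i}) :=
      Nat.sSup_mem hR'ne hR'fin.bddAbove
    have h01 : sInf {i | x i < lam i} ≤ sSup {i | x i < lam i} :=
      le_csSup hRfin.bddAbove (Nat.sInf_mem hRne)
    rcases Nat.lt_or_ge i (sInf {i | x i < lam i}) with hc | hc
    · have hnR : ¬ x i < lam i := fun hm =>
        absurd (Nat.sInf_le (show i ∈ {i | x i < lam i} from hm)) (by omega)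
      have hnR' : ¬ x' i < lam i := fun hm =>
        absurd (Nat.sInf_le (show i ∈ {i | x' i < lam i} from hm)) (by omega)
      have := hx.1 i; have := hx'.1 i; omega
    · rcases Nat.lt_or_ge i (sSup {i | x i < lam i}) with hc2 | hc2
      · have e1 : x i + 1 = lam (i + 1) :=
          ribbon_step hxp hlam hx (R_interval hx hi0 hi1 hc (by omega))
            (R_interval hx hi0 hi1 (by omega) (by omega))
        have e2 : x' i + 1 = lam (i + 1) :=
          ribbon_step hxp' hlam hx' (R_interval hx' hi0' hi1' (by omega) (by omega))
            (R_interval hx' hi0' hi1' (by omega) (by omega))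
        omega
      · rcases Nat.lt_or_ge (sSup {i | x i < lam i}) i with hc3 | hc3
        · have hnR : ¬ x i < lam i := fun hm => absurd (le_csSup hRfin.bddAbove hm) (by omega)
          have := hx.1 i; have := hx'.1 i; omega
        · have he : i = sSup {i | x i < lam i} := by omega
          rw [he]; exact hboundary
  have atSup : ∀ x x' : ℕ → ℕ, IsPartitionFun x → IsPartitionFun x' →
      ∀ _hx : IsRibbon x lam k, ∀ _hx' : IsRibbon x' lam k,
      sInf {i | x i < lam i} = sInf {i | x' i < lam i} →
      sSup {i | x i < lam i} < sSup {i | x' i < lam i} →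
      x' (sSup {i | x i < lam i}) ≤ x (sSup {i | x i < lam i}) := by
    intro x x' hxp hxp' hx hx' hinf hsup
    have hRne := R_nonempty hx hk
    have hR'ne := R_nonempty hx' hk
    have hRfin : {i | x i < lam i}.Finite := R_finite hlam
    have hR'fin : {i | x' i < lam i}.Finite := R_finite hlam
    have hi0' : x' (sInf {i | x' i < lam i}) < lam (sInf {i | x' i < lam i}) := Nat.sInf_mem hR'ne
    have hi1' : x' (sSup {i | x' i < lam i}) < lam (sSup {i | x' i < lam i}) :=
      Nat.sSup_mem hR'ne hR'fin.bddAbove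
    have h01 : sInf {i | x i < lam i} ≤ sSup {i | x i < lam i} :=
      le_csSup hRfin.bddAbove (Nat.sInf_mem hRne)
    have e2 : x' (sSup {i | x i < lam i}) + 1 = lam (sSup {i | x i < lam i} + 1) :=
      ribbon_step hxp' hlam hx' (R_interval hx' hi0' hi1' (by omega) (by omega))
        (R_interval hx' hi0' hi1' (by omega) (by omega))
    have hnR : ¬ x (sSup {i | x i < lam i} + 1) < lam (sSup {i | x i < lam i} + 1) :=
      fun hm => absurd (le_csSup hRfin.bddAbove hm) (by omega)
    have hmono : x (sSup {i | x i < lam i} + 1) ≤ x (sSup {i | x i < lam i}) := hxp.1 (by omega)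
    have := hx.1 (sSup {i | x i < lam i} + 1)
    omega
  rcases lt_trichotomy (sSup {i | mu i < lam i}) (sSup {i | mu' i < lam i}) with hlt | heq | hgt
  · exact rem_eq_of_le h h'
      (main mu mu' hmu hmu' h h' htop hlt.le (atSup mu mu' hmu hmu' h h' htop hlt))
  · rcases le_total (mu' (sSup {i | mu i < lam i})) (mu (sSup {i | mu i < lam i})) with hb | hb
    · exact rem_eq_of_le h h' (main mu mu' hmu hmu' h h' htop heq.le hb)
    · refine (rem_eq_of_le h' h (main mu' mu hmu' hmu h' h htop.symm heq.ge ?_)).symm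
      rw [← heq]
      exact hb
  · exact (rem_eq_of_le h' h
      (main mu' mu hmu' hmu h' h htop.symm hgt.le (atSup mu' mu hmu' hmu h' h htop.symm hgt))).symm

lemma add_unique {mu mu' lam : ℕ → ℕ} {k : ℕ} (hk : 0 < k)
    (hmu : IsPartitionFun mu) (hmu' : IsPartitionFun mu') (hlam : IsPartitionFun lam)
    (h : IsRibbon lam mu k) (h' : IsRibbon lam mu' k)
    (hbot : sSup {i | lam i < mu i} = sSup {i | lam i < mu' i}) : mu = mu' := by
  have main : ∀ x x' : ℕ → ℕ, IsPartitionFun x → IsPartitionFun x' →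
      ∀ _hx : IsRibbon lam x k, ∀ _hx' : IsRibbon lam x' k,
      sSup {i | lam i < x i} = sSup {i | lam i < x' i} →
      sInf {i | lam i < x i} ≤ sInf {i | lam i < x' i} →
      x' (sInf {i | lam i < x' i}) ≤ x (sInf {i | lam i < x' i}) →
      ∀ i, x' i ≤ x i := by
    intro x x' hxp hxp' hx hx' hsup hinf hboundary i
    have hRne := R_nonempty hx hk
    have hR'ne := R_nonempty hx' hk
    have hRfin : {i | lam i < x i}.Finite := R_finite hxp
    have hR'fin : {i | lam i < x' i}.Finite := R_finite hxp'
    have hi0 : lam (sInf {i | lam i < x i}) < x (sInf {i | lam i < x i}) := Nat.sInf_mem hRne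
    have hi1 : lam (sSup {i | lam i < x i}) < x (sSup {i | lam i < x i}) :=
      Nat.sSup_mem hRne hRfin.bddAbove
    have hi0' : lam (sInf {i | lam i < x' i}) < x' (sInf {i | lam i < x' i}) := Nat.sInf_mem hR'ne
    have hi1' : lam (sSup {i | lam i < x' i}) < x' (sSup {i | lam i < x' i}) :=
      Nat.sSup_mem hR'ne hR'fin.bddAbove
    have h01' : sInf {i | lam i < x' i} ≤ sSup {i | lam i < x' i} :=
      le_csSup hR'fin.bddAbove (Nat.sInf_mem hR'ne)
    rcases Nat.lt_or_ge (sSup {i | lam i < x i}) i with hc | hc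
    · have hnR : ¬ lam i < x i := fun hm => absurd (le_csSup hRfin.bddAbove hm) (by omega)
      have hnR' : ¬ lam i < x' i := fun hm => absurd (le_csSup hR'fin.bddAbove hm) (by omega)
      have := hx.1 i; have := hx'.1 i; omega
    · rcases Nat.lt_or_ge (sInf {i | lam i < x' i}) i with hc2 | hc2
      · obtain ⟨j, rfl⟩ : ∃ j, i = j + 1 := ⟨i - 1, by omega⟩
        have e1 : lam j + 1 = x (j + 1) :=
          ribbon_step hlam hxp hx (R_interval hx hi0 hi1 (by omega) (by omega))
            (R_interval hx hi0 hi1 (by omega) (by omega))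
        have e2 : lam j + 1 = x' (j + 1) :=
          ribbon_step hlam hxp' hx' (R_interval hx' hi0' hi1' (by omega) (by omega))
            (R_interval hx' hi0' hi1' (by omega) (by omega))
        omega
      · rcases Nat.lt_or_ge i (sInf {i | lam i < x' i}) with hc3 | hc3
        · have hnR' : ¬ lam i < x' i := fun hm =>
            absurd (Nat.sInf_le (show i ∈ {i | lam i < x' i} from hm)) (by omega)
          have := hx'.1 i; have := hx.1 i; omega
        · have he : i = sInf {i | lam i < x' i} := by omega
          rw [he]; exact hboundary
  have atInf : ∀ x x' : ℕ → ℕ, IsPartitionFun x → IsPartitionFun x' →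
      ∀ _hx : IsRibbon lam x k, ∀ _hx' : IsRibbon lam x' k,
      sSup {i | lam i < x i} = sSup {i | lam i < x' i} →
      sInf {i | lam i < x i} < sInf {i | lam i < x' i} →
      x' (sInf {i | lam i < x' i}) ≤ x (sInf {i | lam i < x' i}) := by
    intro x x' hxp hxp' hx hx' hsup hinf
    have hRne := R_nonempty hx hk
    have hR'ne := R_nonempty hx' hk
    have hRfin : {i | lam i < x i}.Finite := R_finite hxp
    have hR'fin : {i | lam i < x' i}.Finite := R_finite hxp'
    have hi0 : lam (sInf {i | lam i < x i}) < x (sInf {i | lam i < x i}) := Nat.sInf_mem hRne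
    have hi1 : lam (sSup {i | lam i < x i}) < x (sSup {i | lam i < x i}) :=
      Nat.sSup_mem hRne hRfin.bddAbove
    have h01' : sInf {i | lam i < x' i} ≤ sSup {i | lam i < x' i} :=
      le_csSup hR'fin.bddAbove (Nat.sInf_mem hR'ne)
    obtain ⟨j, hj⟩ : ∃ j, sInf {i | lam i < x' i} = j + 1 :=
      ⟨sInf {i | lam i < x' i} - 1, by omega⟩
    have e1 : lam j + 1 = x (j + 1) :=
      ribbon_step hlam hxp hx (R_interval hx hi0 hi1 (by omega) (by omega))
        (R_interval hx hi0 hi1 (by omega) (by omega))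
    have hnR' : ¬ lam j < x' j := fun hm =>
      absurd (Nat.sInf_le (show j ∈ {i | lam i < x' i} from hm)) (by omega)
    have hxj : x' j ≤ lam j := by have := h'.1 j; omega
    have hmono : x' (j + 1) ≤ x' j := hxp'.1 (by omega)
    rw [hj]
    omega
  rcases lt_trichotomy (sInf {i | lam i < mu i}) (sInf {i | lam i < mu' i}) with hlt | heq | hgt
  · exact (add_eq_of_le h' h
      (main mu mu' hmu hmu' h h' hbot hlt.le (atInf mu mu' hmu hmu' h h' hbot hlt))).symm
  · rcases le_total (mu' (sInf {i | lam i < mu' i})) (mu (sInf {i | lam i < mu' i})) with hb | hb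
    · exact (add_eq_of_le h' h (main mu mu' hmu hmu' h h' hbot heq.le hb)).symm
    · refine add_eq_of_le h h' (main mu' mu hmu' hmu h' h hbot.symm heq.ge ?_)
      rw [heq]
      exact hb
  · exact add_eq_of_le h h'
      (main mu' mu hmu' hmu h' h hbot.symm hgt.le (atInf mu' mu hmu' hmu h' h hbot.symm hgt))

lemma count_le {A : Set (ℕ → ℕ)} {f : (ℕ → ℕ) → ℕ} {N : ℕ}
    (hmap : ∀ mu ∈ A, f mu < N) (hinj : Set.InjOn f A) : A.Finite ∧ A.ncard ≤ N := by
  have hsub : f '' A ⊆ Set.Iio N := by rintro _ ⟨mu, hmu, rfl⟩; exact hmap mu hmu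
  have hfin : A.Finite := Set.Finite.of_finite_image ((Set.finite_Iio N).subset hsub) hinj
  refine ⟨hfin, ?_⟩
  have h1 : A.ncard = (f '' A).ncard := (Set.ncard_image_of_injOn hinj).symm
  have h2 : (f '' A).ncard ≤ (Set.Iio N).ncard := Set.ncard_le_ncard hsub (Set.finite_Iio N)
  have h3 : (Set.Iio N : Set ℕ).ncard = N := by
    rw [← Finset.coe_Iio, Set.ncard_coe_finset]
    exact Nat.card_Iio N
  omega

end RibbonPf


/-- Fix `k > 0` and a partition `λ` contained in the rectangle `⟨mⁿ⟩`. Then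
there are at most `min m n` partitions `μ` with `λ\μ` a `k`-ribbon, and at most
`min m n` partitions `μ ⊆ ⟨mⁿ⟩` with `μ\λ` a `k`-ribbon. -/
theorem ribbon_count_le (k m n : ℕ) (hk : 0 < k) (lam : ℕ → ℕ)
    (hlam : IsPartitionFun lam) (hlam_m : ∀ i, lam i ≤ m) (hlam_n : ∀ i, n ≤ i → lam i = 0) :
    ({mu : ℕ → ℕ | IsPartitionFun mu ∧ IsRibbon mu lam k}.Finite ∧
      {mu : ℕ → ℕ | IsPartitionFun mu ∧ IsRibbon mu lam k}.ncard ≤ min m n) ∧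
    ({mu : ℕ → ℕ | IsPartitionFun mu ∧ (∀ i, mu i ≤ m) ∧ (∀ i, n ≤ i → mu i = 0) ∧
        IsRibbon lam mu k}.Finite ∧
      {mu : ℕ → ℕ | IsPartitionFun mu ∧ (∀ i, mu i ≤ m) ∧ (∀ i, n ≤ i → mu i = 0) ∧
        IsRibbon lam mu k}.ncard ≤ min m n) := by
  have hlamc := RibbonPf.conj_partition hlam
  constructor
  · have map1 : ∀ mu ∈ {mu : ℕ → ℕ | IsPartitionFun mu ∧ IsRibbon mu lam k},
        (fun mu => sInf {i | mu i < lam i}) mu < n := by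
      rintro mu ⟨hmup, hrib⟩
      have hne := RibbonPf.R_nonempty hrib hk
      have hm : mu (sInf {i | mu i < lam i}) < lam (sInf {i | mu i < lam i}) := Nat.sInf_mem hne
      show sInf {i | mu i < lam i} < n
      by_contra hc
      have := hlam_n (sInf {i | mu i < lam i}) (by omega)
      omega
    have inj1 : Set.InjOn (fun mu => sInf {i | mu i < lam i})
        {mu | IsPartitionFun mu ∧ IsRibbon mu lam k} := by
      rintro mu ⟨hmup, hrib⟩ mu' ⟨hmup', hrib'⟩ heq
      exact RibbonPf.rem_unique hk hmup hmup' hlam hrib hrib' heq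
    have map2 : ∀ mu ∈ {mu : ℕ → ℕ | IsPartitionFun mu ∧ IsRibbon mu lam k},
        (fun mu => sInf {j | RibbonPf.conj mu j < RibbonPf.conj lam j}) mu < m := by
      rintro mu ⟨hmup, hrib⟩
      have hribc := RibbonPf.ribbon_conj hmup hlam hrib
      have hne := RibbonPf.R_nonempty hribc hk
      have hm2 := Nat.sInf_mem hne
      simp only [Set.mem_setOf_eq] at hm2
      show sInf {j | RibbonPf.conj mu j < RibbonPf.conj lam j} < m
      by_contra hc
      have := RibbonPf.conj_eq_zero hlam_m
        (show m ≤ sInf {j | RibbonPf.conj mu j < RibbonPf.conj lam j} by omega)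
      omega
    have inj2 : Set.InjOn (fun mu => sInf {j | RibbonPf.conj mu j < RibbonPf.conj lam j})
        {mu | IsPartitionFun mu ∧ IsRibbon mu lam k} := by
      rintro mu ⟨hmup, hrib⟩ mu' ⟨hmup', hrib'⟩ heq
      have := RibbonPf.rem_unique hk (RibbonPf.conj_partition hmup)
        (RibbonPf.conj_partition hmup') hlamc (RibbonPf.ribbon_conj hmup hlam hrib)
        (RibbonPf.ribbon_conj hmup' hlam hrib') heq
      exact RibbonPf.conj_inj hmup hmup' this
    have h1 := RibbonPf.count_le map1 inj1
    have h2 := RibbonPf.count_le map2 inj2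
    exact ⟨h1.1, le_min h2.2 h1.2⟩
  · have map1 : ∀ mu ∈ {mu : ℕ → ℕ | IsPartitionFun mu ∧ (∀ i, mu i ≤ m) ∧
        (∀ i, n ≤ i → mu i = 0) ∧ IsRibbon lam mu k},
        (fun mu => sSup {i | lam i < mu i}) mu < n := by
      rintro mu ⟨hmup, hm_le, hn_zero, hrib⟩
      have hne := RibbonPf.R_nonempty hrib hk
      have hfin : {i | lam i < mu i}.Finite := RibbonPf.R_finite hmup
      have hm : lam (sSup {i | lam i < mu i}) < mu (sSup {i | lam i < mu i}) :=
        Nat.sSup_mem hne hfin.bddAbove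
      show sSup {i | lam i < mu i} < n
      by_contra hc
      have := hn_zero (sSup {i | lam i < mu i}) (by omega)
      omega
    have inj1 : Set.InjOn (fun mu => sSup {i | lam i < mu i})
        {mu | IsPartitionFun mu ∧ (∀ i, mu i ≤ m) ∧ (∀ i, n ≤ i → mu i = 0) ∧
          IsRibbon lam mu k} := by
      rintro mu ⟨hmup, _, _, hrib⟩ mu' ⟨hmup', _, _, hrib'⟩ heq
      exact RibbonPf.add_unique hk hmup hmup' hlam hrib hrib' heq
    have map2 : ∀ mu ∈ {mu : ℕ → ℕ | IsPartitionFun mu ∧ (∀ i, mu i ≤ m) ∧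
        (∀ i, n ≤ i → mu i = 0) ∧ IsRibbon lam mu k},
        (fun mu => sSup {j | RibbonPf.conj lam j < RibbonPf.conj mu j}) mu < m := by
      rintro mu ⟨hmup, hm_le, hn_zero, hrib⟩
      have hribc := RibbonPf.ribbon_conj hlam hmup hrib
      have hne := RibbonPf.R_nonempty hribc hk
      have hfin : {j | RibbonPf.conj lam j < RibbonPf.conj mu j}.Finite :=
        RibbonPf.R_finite (RibbonPf.conj_partition hmup)
      have hm2 := Nat.sSup_mem hne hfin.bddAbove
      simp only [Set.mem_setOf_eq] at hm2
      show sSup {j | RibbonPf.conj lam j < RibbonPf.conj mu j} < m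
      by_contra hc
      have := RibbonPf.conj_eq_zero hm_le
        (show m ≤ sSup {j | RibbonPf.conj lam j < RibbonPf.conj mu j} by omega)
      omega
    have inj2 : Set.InjOn (fun mu => sSup {j | RibbonPf.conj lam j < RibbonPf.conj mu j})
        {mu | IsPartitionFun mu ∧ (∀ i, mu i ≤ m) ∧ (∀ i, n ≤ i → mu i = 0) ∧
          IsRibbon lam mu k} := by
      rintro mu ⟨hmup, _, _, hrib⟩ mu' ⟨hmup', _, _, hrib'⟩ heq
      have := RibbonPf.add_unique hk (RibbonPf.conj_partition hmup)
        (RibbonPf.conj_partition hmup') hlamc (RibbonPf.ribbon_conj hlam hmup hrib)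
        (RibbonPf.ribbon_conj hlam hmup' hrib') heq
      exact RibbonPf.conj_inj hmup hmup' this
    have h1 := RibbonPf.count_le map1 inj1
    have h2 := RibbonPf.count_le map2 inj2
    exact ⟨h1.1, le_min h2.2 h1.2⟩
end

section
/- Let n, r be positive integers and μ a partition of length at most n, and for 1 ≤ q ≤ n let μ[q] be the sequence obtained from μ by adding r to its q-th entry. Then a partition λ of length at most n satisfies that λ\μ is an r-ribbon if and only if there exists q with 1 ≤ q ≤ n such that the sequence λ + ρ_n is a permutation of μ[q] + ρ_n, where ρ_n = (n−1, n−2, ..., 1, 0). Moreover, in that case the sign of the sorting permutation equals (−1)^{height(λ\μ)}. -/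
def cycNat (a b : ℕ) : ℕ → ℕ := fun i => if i = a then b else if a < i ∧ i ≤ b then i - 1 else i

def cycNatInv (a b : ℕ) : ℕ → ℕ := fun i => if i = b then a else if a ≤ i ∧ i < b then i + 1 else i

def cycPerm (n a b : ℕ) (hab : a ≤ b) (hb : b < n) : Equiv.Perm (Fin n) where
  toFun i := ⟨cycNat a b i, by have := i.isLt; unfold cycNat; split_ifs <;> omega⟩
  invFun i := ⟨cycNatInv a b i, by have := i.isLt; unfold cycNatInv; split_ifs <;> omega⟩
  left_inv i := by
    have := i.isLt
    apply Fin.ext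
    simp only [cycNat, cycNatInv]
    split_ifs <;> omega
  right_inv i := by
    have := i.isLt
    apply Fin.ext
    simp only [cycNat, cycNatInv]
    split_ifs <;> omega

@[simp] lemma cycPerm_apply (n a b : ℕ) (hab : a ≤ b) (hb : b < n) (i : Fin n) :
    ((cycPerm n a b hab hb i : Fin n) : ℕ) = cycNat a b i := rfl

lemma swap_val {n a : ℕ} (ha : a + 1 < n) (i : Fin n) :
    ((Equiv.swap (⟨a, by omega⟩ : Fin n) ⟨a+1, ha⟩ : Equiv.Perm (Fin n)) i : ℕ) =
      if (i:ℕ) = a then a+1 else if (i:ℕ) = a+1 then a else i := by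
  rw [Equiv.swap_apply_def]
  have := i.isLt
  split_ifs with h1 h2 h3 h4 h5 <;> simp_all [Fin.ext_iff] <;> omega

lemma cycPerm_eq_self (n a : ℕ) (ha : a < n) (hab : a ≤ a) : cycPerm n a a hab ha = 1 := by
  apply Equiv.ext; intro i
  apply Fin.ext
  simp only [cycPerm_apply, cycNat, Equiv.Perm.one_apply]
  split_ifs <;> omega

lemma cycPerm_succ (n a b : ℕ) (hab : a + 1 ≤ b) (hb : b < n) :
    cycPerm n a b (by omega) hb =
      cycPerm n (a+1) b hab hb * Equiv.swap (⟨a, by omega⟩ : Fin n) ⟨a+1, by omega⟩ := by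
  apply Equiv.ext; intro i
  apply Fin.ext
  rw [Equiv.Perm.mul_apply]
  have h2 : ((cycPerm n (a+1) b hab hb) ((Equiv.swap (⟨a, by omega⟩ : Fin n) ⟨a+1, by omega⟩) i) : ℕ)
      = cycNat (a+1) b ((Equiv.swap (⟨a, by omega⟩ : Fin n) ⟨a+1, by omega⟩) i : ℕ) := rfl
  rw [h2, swap_val (by omega), cycPerm_apply]
  have := i.isLt
  simp only [cycNat]
  split_ifs <;> omega

lemma sign_cycPerm (n : ℕ) : ∀ k a b (hab : a ≤ b) (hb : b < n), b - a = k →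
    Equiv.Perm.sign (cycPerm n a b hab hb) = (-1) ^ (b - a) := by
  intro k
  induction k with
  | zero =>
    intro a b hab hb h
    have : a = b := by omega
    subst this
    rw [cycPerm_eq_self]
    simp [h]
  | succ k ih =>
    intro a b hab hb h
    have hab' : a + 1 ≤ b := by omega
    rw [cycPerm_succ n a b hab' hb, map_mul, ih (a+1) b hab' hb (by omega),
      Equiv.Perm.sign_swap (by simp [Fin.ext_iff])]
    have : b - a = (b - (a+1)) + 1 := by omega
    rw [this, pow_succ]

lemma my_le_apply {n : ℕ} {f : Fin n → Fin n} (hf : StrictMono f) : ∀ x, x ≤ f x := by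
  suffices H : ∀ (k : ℕ) (x : Fin n), (x : ℕ) ≤ k → x ≤ f x by
    exact fun x => H n x x.isLt.le
  intro k
  induction k with
  | zero =>
    intro x hx
    rw [Fin.le_def]
    omega
  | succ k ih =>
    intro x hx
    by_contra h
    push_neg at h
    have h2 : f x ≤ f (f x) := ih (f x) (by have := Fin.lt_def.mp h; omega)
    exact absurd (hf h) (not_lt.mpr h2)

theorem Equiv.Perm.apply_inv_self {α : Type*} (f : Equiv.Perm α) (x : α) : f (f⁻¹ x) = x :=
  f.apply_symm_apply x

lemma perm_eq_one_of_strictAnti {n : ℕ} (f g : Fin n → ℕ) (hf : StrictAnti f) (hg : StrictAnti g)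
    (π : Equiv.Perm (Fin n)) (h : ∀ i, f i = g (π i)) : π = 1 := by
  have hmono : StrictMono (π : Fin n → Fin n) := by
    intro i j hij
    have : g (π j) < g (π i) := by rw [← h i, ← h j]; exact hf hij
    exact hg.lt_iff_gt.mp this
  have hmono' : StrictMono (fun i : Fin n => π⁻¹ i) := by
    intro i j hij
    rcases lt_trichotomy (π⁻¹ i) (π⁻¹ j) with h' | h' | h'
    · exact h'
    · exfalso; rw [← Equiv.Perm.apply_inv_self π i, ← Equiv.Perm.apply_inv_self π j, h'] at hij
      exact lt_irrefl _ hij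
    · exfalso
      have := hmono h'
      rw [Equiv.Perm.apply_inv_self, Equiv.Perm.apply_inv_self] at this
      exact absurd hij (not_lt.mpr this.le)
  apply Equiv.ext; intro i
  have h1 : i ≤ π i := my_le_apply hmono i
  have h2 : i ≤ π⁻¹ i := my_le_apply hmono' i
  have h3 : π i ≤ π (π⁻¹ i) := by
    rcases eq_or_lt_of_le h2 with h' | h'
    · rw [← h']
    · exact (hmono h').le
  rw [Equiv.Perm.apply_inv_self] at h3
  exact le_antisymm h3 h1

/-- Row description of a ribbon: the skew diagram occupies rows `a..b`,
consecutive rows overlap in exactly one column, and the total size is `r`. -/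
def RibbonRows (mu lam : ℕ → ℕ) (r a b : ℕ) : Prop :=
  a ≤ b ∧ (∀ i, i < a ∨ b < i → lam i = mu i) ∧ (∀ i, a ≤ i → i ≤ b → mu i < lam i) ∧
  (∀ i, a ≤ i → i < b → lam (i+1) = mu i + 1) ∧ lam a + b = mu b + a + r

lemma skew_mem (mu lam : ℕ → ℕ) (c : ℕ × ℕ) :
    c ∈ skewCells mu lam ↔ mu c.1 ≤ c.2 ∧ c.2 < lam c.1 := by
  simp only [skewCells, cells, Set.mem_diff, Set.mem_setOf_eq]
  omega

lemma skew_eq_finset (mu lam : ℕ → ℕ) (a b : ℕ) (hle : ∀ i, mu i ≤ lam i)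
    (hout : ∀ i, i < a ∨ b < i → lam i = mu i) :
    skewCells mu lam =
      ↑((Finset.Icc a b).biUnion (fun i => {i} ×ˢ Finset.Ico (mu i) (lam i))) := by
  ext c
  simp only [skew_mem, Finset.coe_biUnion, Set.mem_iUnion, Finset.mem_coe, Finset.mem_Icc,
    Finset.mem_product, Finset.mem_singleton, Finset.mem_Ico]
  constructor
  · rintro ⟨h1, h2⟩
    refine ⟨c.1, ?_, rfl, h1, h2⟩
    by_contra h
    have := hout c.1 (by omega)
    omega
  · rintro ⟨i, _, rfl, h1, h2⟩
    exact ⟨h1, h2⟩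

lemma skew_card (mu lam : ℕ → ℕ) (a b : ℕ) :
    ((Finset.Icc a b).biUnion (fun i => {i} ×ˢ Finset.Ico (mu i) (lam i))).card =
      ∑ i ∈ Finset.Icc a b, (lam i - mu i) := by
  rw [Finset.card_biUnion]
  · apply Finset.sum_congr rfl
    intro i _
    rw [Finset.card_product, Finset.card_singleton, Nat.card_Ico, one_mul]
  · intro i _ j _ hij
    simp only [Finset.disjoint_left, Finset.mem_product, Finset.mem_singleton]
    rintro ⟨x, y⟩ ⟨rfl, _⟩ ⟨h, _⟩
    exact hij h

lemma telescope (mu lam : ℕ → ℕ) (a : ℕ) : ∀ b, a ≤ b →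
    (∀ i, a ≤ i → i < b → lam (i+1) = mu i + 1) →
    (∀ i, a ≤ i → i ≤ b → mu i ≤ lam i) →
    (∑ i ∈ Finset.Icc a b, (lam i - mu i)) + mu b + a = lam a + b := by
  intro b hb
  induction b, hb using Nat.le_induction with
  | base =>
    intro _ h2
    rw [Finset.Icc_self, Finset.sum_singleton]
    have := h2 a le_rfl le_rfl
    omega
  | succ b hb ih =>
    intro h1 h2
    have hIcc : Finset.Icc a (b+1) = insert (b+1) (Finset.Icc a b) := by
      rw [← Finset.insert_Icc_right_eq_Icc_add_one (by omega : a ≤ b + 1)]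
    rw [hIcc, Finset.sum_insert (by simp)]
    have e1 := h1 b hb (by omega)
    have e2 := h2 (b+1) (by omega) le_rfl
    have ihh := ih (fun i hi hib => h1 i hi (by omega)) (fun i hi hib => h2 i hi (by omega))
    omega

lemma adjCell_symm {a b : ℕ × ℕ} (h : AdjCell a b) : AdjCell b a := by
  unfold AdjCell at *; tauto

lemma rtg_symm {S : Set (ℕ × ℕ)} {u v : ℕ × ℕ}
    (h : Relation.ReflTransGen (fun x y => x ∈ S ∧ y ∈ S ∧ AdjCell x y) u v) :
    Relation.ReflTransGen (fun x y => x ∈ S ∧ y ∈ S ∧ AdjCell x y) v u := by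
  induction h with
  | refl => exact .refl
  | tail _ hstep ih =>
    exact Relation.ReflTransGen.head ⟨hstep.2.1, hstep.1, adjCell_symm hstep.2.2⟩ ih

lemma row_path (mu lam : ℕ → ℕ) (i c : ℕ) :
    ∀ k, (i, c) ∈ skewCells mu lam → (i, c + k) ∈ skewCells mu lam →
    Relation.ReflTransGen
      (fun x y => x ∈ skewCells mu lam ∧ y ∈ skewCells mu lam ∧ AdjCell x y) (i, c) (i, c + k) := by
  intro k
  induction k with
  | zero => intro _ _; exact .refl
  | succ k ih =>
    intro h1 h2
    have hk : (i, c + k) ∈ skewCells mu lam := by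
      rw [skew_mem] at h1 h2 ⊢
      simp only at *
      omega
    exact (ih h1 hk).tail ⟨hk, h2, Or.inl ⟨rfl, Or.inl rfl⟩⟩

lemma row_path' (mu lam : ℕ → ℕ) (i c d : ℕ) (h1 : (i, c) ∈ skewCells mu lam)
    (h2 : (i, d) ∈ skewCells mu lam) :
    Relation.ReflTransGen
      (fun x y => x ∈ skewCells mu lam ∧ y ∈ skewCells mu lam ∧ AdjCell x y) (i, c) (i, d) := by
  rcases le_total c d with h | h
  · have := row_path mu lam i c (d - c) h1 (by rwa [show c + (d - c) = d by omega])
    rwa [show c + (d - c) = d by omega] at this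
  · have := row_path mu lam i d (c - d) h2 (by rwa [show d + (c - d) = c by omega])
    rw [show d + (c - d) = c by omega] at this
    exact rtg_symm this

lemma conn_to_bottom (mu lam : ℕ → ℕ) (r a b : ℕ) (hrr : RibbonRows mu lam r a b)
    (hmu : Antitone mu) :
    ∀ k i c, a ≤ i → i ≤ b → b - i = k → (i, c) ∈ skewCells mu lam →
    Relation.ReflTransGen
      (fun x y => x ∈ skewCells mu lam ∧ y ∈ skewCells mu lam ∧ AdjCell x y) (i, c) (b, mu b) := by
  obtain ⟨hab, hout, hne, hstep, hsum⟩ := hrr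
  intro k
  induction k with
  | zero =>
    intro i c hai hib hk h1
    have hib2 : i = b := by omega
    have hb : (b, mu b) ∈ skewCells mu lam := by
      rw [skew_mem]; exact ⟨le_rfl, hne b hab le_rfl⟩
    rw [hib2] at h1 ⊢
    exact row_path' mu lam b c (mu b) h1 hb
  | succ k ih =>
    intro i c hai hib hk h1
    have hib' : i < b := by omega
    have hil : (i, mu i) ∈ skewCells mu lam := by
      rw [skew_mem]; exact ⟨le_rfl, hne i hai (by omega)⟩
    have hnext : (i + 1, mu i) ∈ skewCells mu lam := by
      rw [skew_mem]
      refine ⟨hmu (by omega), ?_⟩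
      rw [hstep i hai hib']
      omega
    have p1 := row_path' mu lam i c (mu i) h1 hil
    have p2 : Relation.ReflTransGen
        (fun x y => x ∈ skewCells mu lam ∧ y ∈ skewCells mu lam ∧ AdjCell x y)
        (i, mu i) (i + 1, mu i) :=
      Relation.ReflTransGen.single ⟨hil, hnext, Or.inr ⟨rfl, Or.inl rfl⟩⟩
    exact (p1.trans p2).trans (ih (i+1) (mu i) (by omega) (by omega) (by omega) hnext)

lemma ribbonRows_connected (mu lam : ℕ → ℕ) (r a b : ℕ) (hrr : RibbonRows mu lam r a b)
    (hmu : Antitone mu) : ConnectedCells (skewCells mu lam) := by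
  intro u hu v hv
  obtain ⟨hab, hout, hne, hstep, hsum⟩ := hrr
  have hrow : ∀ w : ℕ × ℕ, w ∈ skewCells mu lam → a ≤ w.1 ∧ w.1 ≤ b := by
    intro w hw
    rw [skew_mem] at hw
    by_contra h
    have := hout w.1 (by omega)
    omega
  have h1 := conn_to_bottom mu lam r a b ⟨hab, hout, hne, hstep, hsum⟩ hmu (b - u.1) u.1 u.2
    (hrow u hu).1 (hrow u hu).2 rfl (by simpa using hu)
  have h2 := conn_to_bottom mu lam r a b ⟨hab, hout, hne, hstep, hsum⟩ hmu (b - v.1) v.1 v.2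
    (hrow v hv).1 (hrow v hv).2 rfl (by simpa using hv)
  exact h1.trans (rtg_symm h2)

lemma ribbonRows_isRibbon (mu lam : ℕ → ℕ) (r a b : ℕ) (hrr : RibbonRows mu lam r a b)
    (hmu : Antitone mu) : IsRibbon mu lam r := by
  obtain ⟨hab, hout, hne, hstep, hsum⟩ := hrr
  have hle : ∀ i, mu i ≤ lam i := by
    intro i
    rcases le_or_gt a i with h | h
    · rcases le_or_gt i b with h' | h'
      · exact (hne i h h').le
      · exact (hout i (Or.inr h')).ge
    · exact (hout i (Or.inl h)).ge
  have hset := skew_eq_finset mu lam a b hle hout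
  have hfin : (skewCells mu lam).Finite := by rw [hset]; exact Finset.finite_toSet _
  have hcard : (skewCells mu lam).ncard = r := by
    rw [hset, Set.ncard_coe_finset, skew_card]
    have := telescope mu lam a b hab hstep (fun i hi hib => (hne i hi hib).le)
    omega
  refine ⟨hle, hfin, hcard, ribbonRows_connected mu lam r a b ⟨hab, hout, hne, hstep, hsum⟩ hmu, ?_⟩
  rintro ⟨⟨i, c⟩, h1, h2, h3, h4⟩
  rw [skew_mem] at h1 h2 h3 h4
  simp only at h1 h2 h3 h4
  have hrow : ∀ j y, mu j ≤ y → y < lam j → a ≤ j ∧ j ≤ b := by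
    intro j y hy1 hy2
    by_contra h
    have := hout j (by omega)
    omega
  have hi1 := hrow i c h1.1 h1.2
  have hi2 := hrow (i+1) c h2.1 h2.2
  have := hstep i (by omega) (by omega)
  omega

lemma crossing {S : Set (ℕ × ℕ)} {u v : ℕ × ℕ}
    (h : Relation.ReflTransGen (fun x y => x ∈ S ∧ y ∈ S ∧ AdjCell x y) u v)
    (i : ℕ) (hv : i < v.1) (hu : u.1 ≤ i) : ∃ c, (i, c) ∈ S ∧ (i + 1, c) ∈ S := by
  induction h with
  | refl => omega
  | @tail x y _ hstep ih =>
    rcases le_or_gt x.1 i with h' | h'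
    · obtain ⟨hxS, hyS, hadj⟩ := hstep
      rcases hadj with ⟨h1, _⟩ | ⟨h1, h2 | h2⟩
      · omega
      · refine ⟨x.2, ?_, ?_⟩
        · have hx : x = (i, x.2) := by
            apply Prod.ext <;> simp <;> omega
          rwa [hx] at hxS
        · have hy : y = (i + 1, x.2) := by
            apply Prod.ext <;> simp <;> omega
          rwa [hy] at hyS
      · omega
    · exact ih h'

lemma isRibbon_ribbonRows (n : ℕ) (mu lam : ℕ → ℕ) (r : ℕ) (hr : 0 < r)
    (hmu : Antitone mu) (hlam : Antitone lam)
    (h : IsRibbon mu lam r) : ∃ a b, RibbonRows mu lam r a b := by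
  obtain ⟨hle, hfin, hcard, hconn, h2x2⟩ := h
  have hSne : (skewCells mu lam).Nonempty := by
    rw [← Set.ncard_pos hfin, hcard]; exact hr
  set T : Finset ℕ := hfin.toFinset.image Prod.fst with hT
  have hTmem : ∀ i, i ∈ T ↔ mu i < lam i := by
    intro i
    simp only [hT, Finset.mem_image, Set.Finite.mem_toFinset]
    constructor
    · rintro ⟨c, hc, rfl⟩
      rw [skew_mem] at hc
      omega
    · intro hi
      exact ⟨(i, mu i), by rw [skew_mem]; exact ⟨le_rfl, hi⟩, rfl⟩
  have hTne : T.Nonempty := by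
    obtain ⟨c, hc⟩ := hSne
    exact ⟨c.1, by rw [hTmem]; rw [skew_mem] at hc; omega⟩
  set a := T.min' hTne with ha
  set b := T.max' hTne with hb
  have hab : a ≤ b := T.min'_le _ (T.max'_mem hTne)
  have hamem : mu a < lam a := (hTmem a).mp (T.min'_mem hTne)
  have hbmem : mu b < lam b := (hTmem b).mp (T.max'_mem hTne)
  have hout : ∀ i, i < a ∨ b < i → lam i = mu i := by
    intro i hi
    have : i ∉ T := by
      intro hmem
      rcases hi with h' | h'
      · exact absurd (T.min'_le i hmem) (by omega)
      · exact absurd (T.le_max' i hmem) (by omega)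
    rw [hTmem] at this
    have := hle i
    omega
  -- the overlap condition
  have hstep : ∀ i, a ≤ i → i < b → lam (i + 1) = mu i + 1 := by
    intro i hai hib
    have hacell : (a, mu a) ∈ skewCells mu lam := by rw [skew_mem]; exact ⟨le_rfl, hamem⟩
    have hbcell : (b, mu b) ∈ skewCells mu lam := by rw [skew_mem]; exact ⟨le_rfl, hbmem⟩
    obtain ⟨c, hc1, hc2⟩ := crossing (hconn _ hacell _ hbcell) i (by simpa) (by simpa)
    rw [skew_mem] at hc1 hc2
    simp only at hc1 hc2
    -- connectivity gives mu i < lam (i+1)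
    have hlt : mu i < lam (i + 1) := by omega
    -- no 2x2 gives lam (i+1) ≤ mu i + 1
    by_contra hcon
    have hbig : mu i + 1 < lam (i + 1) := by omega
    apply h2x2
    refine ⟨(i, mu i), ?_, ?_, ?_, ?_⟩ <;> rw [skew_mem] <;> simp only <;>
      constructor
    · exact le_rfl
    · have := hlam (show i ≤ i + 1 by omega); omega
    · exact hmu (show i ≤ i + 1 by omega)
    · omega
    · omega
    · have := hlam (show i ≤ i + 1 by omega); omega
    · have := hmu (show i ≤ i + 1 by omega); omega
    · omega
  have hne : ∀ i, a ≤ i → i ≤ b → mu i < lam i := by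
    intro i hai hib
    rcases eq_or_lt_of_le hai with rfl | h'
    · exact hamem
    · have := hstep (i - 1) (by omega) (by omega)
      have h2 : mu i ≤ mu (i - 1) := hmu (by omega)
      have h3 : i - 1 + 1 = i := by omega
      rw [h3] at this
      omega
  refine ⟨a, b, hab, hout, hne, hstep, ?_⟩
  have hset := skew_eq_finset mu lam a b hle hout
  have := telescope mu lam a b hab hstep (fun i hi hib => (hne i hi hib).le)
  rw [hset, Set.ncard_coe_finset, skew_card] at hcard
  omega

lemma strictAnti_fin_of_adjacent {n : ℕ} {f : Fin n → ℕ}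
    (h : ∀ (i : ℕ) (hi : i + 1 < n), f ⟨i + 1, hi⟩ < f ⟨i, by omega⟩) : StrictAnti f := by
  have key : ∀ (k : ℕ) (i j : Fin n), (j : ℕ) = (i : ℕ) + k + 1 → f j < f i := by
    intro k
    induction k with
    | zero =>
      intro i j hij
      have hjlt := j.isLt
      have hj : j = ⟨(i : ℕ) + 1, by omega⟩ := Fin.ext (by simp only [Fin.val_mk]; omega)
      rw [hj]
      exact h (i : ℕ) (by omega)
    | succ k ih =>
      intro i j hij
      have hjlt := j.isLt
      have hmid : ((i : ℕ) + k + 1) < n := by omega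
      have h1 := ih i ⟨(i : ℕ) + k + 1, hmid⟩ (by simp)
      have h2 := h ((i : ℕ) + k + 1) (by omega)
      have hj : j = ⟨(i : ℕ) + k + 1 + 1, by omega⟩ := Fin.ext (by simp only [Fin.val_mk]; omega)
      rw [hj]
      exact lt_trans (by exact h2) h1
  intro i j hij
  have := Fin.lt_def.mp hij
  exact key ((j : ℕ) - (i : ℕ) - 1) i j (by omega)

lemma beta_strictAnti {n : ℕ} (lam : ℕ → ℕ) (hlam : Antitone lam) :
    StrictAnti (fun i : Fin n => lam (i : ℕ) + (n - 1 - (i : ℕ))) := by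
  apply strictAnti_fin_of_adjacent
  intro i hi
  have := hlam (show i ≤ i + 1 by omega)
  simp only
  omega

/-- The forward direction: a ribbon gives the permutation equations. -/
lemma ribbonRows_to_perm (n r : ℕ) (mu lam : ℕ → ℕ) (a b : ℕ)
    (hrr : RibbonRows mu lam r a b) (hb : b < n) :
    ∀ i : Fin n,
      lam (i : ℕ) + (n - 1 - (i : ℕ)) =
        Function.update mu b (mu b + r) ((cycPerm n a b hrr.1 hb i : ℕ)) +
          (n - 1 - (cycPerm n a b hrr.1 hb i : ℕ)) := by
  obtain ⟨hab, hout, hne, hstep, hsum⟩ := hrr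
  intro i
  have hi := i.isLt
  rw [cycPerm_apply]
  rcases lt_trichotomy (i : ℕ) a with hc | hc | hc
  · have hcyc : cycNat a b (i : ℕ) = (i : ℕ) := by unfold cycNat; split_ifs <;> omega
    rw [hcyc, Function.update_of_ne (show ((i : ℕ)) ≠ b by omega)]
    have := hout (i : ℕ) (Or.inl hc)
    omega
  · have hcyc : cycNat a b (i : ℕ) = b := by unfold cycNat; split_ifs <;> omega
    rw [hcyc, Function.update_self, hc]
    omega
  · rcases le_or_gt (i : ℕ) b with hc2 | hc2
    · have hcyc : cycNat a b (i : ℕ) = (i : ℕ) - 1 := by unfold cycNat; split_ifs <;> omega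
      rw [hcyc, Function.update_of_ne (show ((i : ℕ) - 1) ≠ b by omega)]
      have := hstep ((i : ℕ) - 1) (by omega) (by omega)
      rw [show (i : ℕ) - 1 + 1 = (i : ℕ) by omega] at this
      omega
    · have hcyc : cycNat a b (i : ℕ) = (i : ℕ) := by unfold cycNat; split_ifs <;> omega
      rw [hcyc, Function.update_of_ne (show ((i : ℕ)) ≠ b by omega)]
      have := hout (i : ℕ) (Or.inr hc2)
      omega

def betaFun (n : ℕ) (f : ℕ → ℕ) : Fin n → ℕ := fun i => f (i : ℕ) + (n - 1 - (i : ℕ))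

lemma Dval (n a b : ℕ) (hab : a ≤ b) (hb : b < n) (g : ℕ → ℕ) (j : ℕ) (hj : j < n) :
    betaFun n g (cycPerm n a b hab hb ⟨j, hj⟩) =
      if j = a then g b + (n - 1 - b)
      else if a < j ∧ j ≤ b then g (j - 1) + (n - 1 - (j - 1))
      else g j + (n - 1 - j) := by
  show g (cycNat a b j) + (n - 1 - cycNat a b j) = _
  unfold cycNat
  split_ifs <;> first | rfl | omega

lemma perm_to_ribbonRows (n r : ℕ) (hr : 0 < r) (mu : ℕ → ℕ)
    (hmu : Antitone mu) (hmulen : ∀ i, n ≤ i → mu i = 0)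
    (lam : ℕ → ℕ) (hlam : Antitone lam) (hlamlen : ∀ i, n ≤ i → lam i = 0)
    (q : Fin n) (σ : Equiv.Perm (Fin n))
    (heq : ∀ i : Fin n,
      lam (i : ℕ) + (n - 1 - (i : ℕ)) =
        Function.update mu (q : ℕ) (mu (q : ℕ) + r) ((σ i : ℕ)) + (n - 1 - (σ i : ℕ))) :
    ∃ (a : ℕ) (ha : a ≤ (q : ℕ)), RibbonRows mu lam r a (q : ℕ) ∧
      σ = cycPerm n a (q : ℕ) ha q.isLt := by
  have hq : (q : ℕ) < n := q.isLt
  have hB : StrictAnti (betaFun n lam) := beta_strictAnti lam hlam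
  have hheq : ∀ i : Fin n, betaFun n lam i =
      betaFun n (Function.update mu (q : ℕ) (mu (q : ℕ) + r)) (σ i) := heq
  have hMinj : Function.Injective (betaFun n (Function.update mu (q : ℕ) (mu (q : ℕ) + r))) := by
    intro x y hxy
    have hx := hheq (σ⁻¹ x)
    have hy := hheq (σ⁻¹ y)
    rw [Equiv.Perm.apply_inv_self] at hx hy
    have := hB.injective (show betaFun n lam (σ⁻¹ x) = betaFun n lam (σ⁻¹ y) by rw [hx, hy, hxy])
    simpa using congrArg σ this
  have hMne : ∀ j : Fin n, j ≠ q →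
      mu (j : ℕ) + (n - 1 - (j : ℕ)) ≠ mu (q : ℕ) + (n - 1 - (q : ℕ)) + r := by
    intro j hj hcontra
    apply hj
    apply hMinj
    show Function.update mu (q : ℕ) (mu (q : ℕ) + r) (j : ℕ) + (n - 1 - (j : ℕ)) =
      Function.update mu (q : ℕ) (mu (q : ℕ) + r) (q : ℕ) + (n - 1 - (q : ℕ))
    rw [Function.update_self, Function.update_of_ne (fun h => hj (Fin.ext h))]
    omega
  have hex : ∃ i, mu i + (n - 1 - i) < mu (q : ℕ) + (n - 1 - (q : ℕ)) + r := ⟨(q : ℕ), by omega⟩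
  set a := Nat.find hex with haDef
  have haq : a ≤ (q : ℕ) := Nat.find_le (by omega)
  have hafind : mu a + (n - 1 - a) < mu (q : ℕ) + (n - 1 - (q : ℕ)) + r := Nat.find_spec hex
  have hgt : ∀ j, j < a → mu (q : ℕ) + (n - 1 - (q : ℕ)) + r < mu j + (n - 1 - j) := by
    intro j hj
    have h1 := Nat.find_min hex hj
    have h2 := hMne ⟨j, by omega⟩ (Fin.ne_of_val_ne (show j ≠ (q : ℕ) by omega))
    simp only at h2
    omega
  have hDval : ∀ (j : ℕ) (hj : j < n),
      betaFun n (Function.update mu (q : ℕ) (mu (q : ℕ) + r))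
        (cycPerm n a (q : ℕ) haq hq ⟨j, hj⟩) =
      if j = a then mu (q : ℕ) + r + (n - 1 - (q : ℕ))
      else if a < j ∧ j ≤ (q : ℕ) then mu (j - 1) + (n - 1 - (j - 1))
      else mu j + (n - 1 - j) := by
    intro j hj
    rw [Dval]
    split_ifs with h1 h2
    · rw [Function.update_self]
    · rw [Function.update_of_ne (by omega)]
    · rw [Function.update_of_ne (by omega)]
  have hDanti : StrictAnti (fun i : Fin n =>
      betaFun n (Function.update mu (q : ℕ) (mu (q : ℕ) + r)) (cycPerm n a (q : ℕ) haq hq i)) := by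
    apply strictAnti_fin_of_adjacent
    intro i hi
    rw [hDval (i + 1) hi, hDval i (by omega)]
    rcases lt_trichotomy (i + 1) a with hc | hc | hc
    · rw [if_neg (by omega), if_neg (by omega), if_neg (by omega), if_neg (by omega)]
      have := hmu (show i ≤ i + 1 by omega)
      omega
    · rw [if_pos hc, if_neg (by omega), if_neg (by omega)]
      have := hgt i (by omega)
      omega
    · rcases eq_or_lt_of_le (show a ≤ i by omega) with hc2 | hc2
      · rw [if_neg (by omega), if_pos hc2.symm]
        rcases le_or_gt (i + 1) (q : ℕ) with hc3 | hc3
        · rw [if_pos ⟨by omega, hc3⟩, show i + 1 - 1 = i from rfl, ← hc2]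
          omega
        · rw [if_neg (by omega)]
          have hqi : (q : ℕ) = i := by omega
          rw [hqi]
          have := hmu (show i ≤ i + 1 by omega)
          omega
      · rcases le_or_gt (i + 1) (q : ℕ) with hc3 | hc3
        · rw [if_neg (by omega), if_pos ⟨by omega, hc3⟩, if_neg (by omega),
            if_pos ⟨hc2, by omega⟩, show i + 1 - 1 = i from rfl]
          have := hmu (show i - 1 ≤ i by omega)
          omega
        · rcases le_or_gt i (q : ℕ) with hc4 | hc4
          · rw [if_neg (by omega), if_neg (by omega), if_neg (by omega), if_pos ⟨hc2, hc4⟩]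
            have := hmu (show i - 1 ≤ i + 1 by omega)
            omega
          · rw [if_neg (by omega), if_neg (by omega), if_neg (by omega), if_neg (by omega)]
            have := hmu (show i ≤ i + 1 by omega)
            omega
  have hπ : (cycPerm n a (q : ℕ) haq hq)⁻¹ * σ = 1 := by
    apply perm_eq_one_of_strictAnti (betaFun n lam)
      (fun i : Fin n =>
        betaFun n (Function.update mu (q : ℕ) (mu (q : ℕ) + r)) (cycPerm n a (q : ℕ) haq hq i))
      hB hDanti
    intro i
    simp only [Equiv.Perm.mul_apply, Equiv.Perm.apply_inv_self]
    exact hheq i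
  have hσ : σ = cycPerm n a (q : ℕ) haq hq := (inv_mul_eq_one.mp hπ).symm
  have hBD : ∀ (j : ℕ) (hj : j < n), lam j + (n - 1 - j) =
      if j = a then mu (q : ℕ) + r + (n - 1 - (q : ℕ))
      else if a < j ∧ j ≤ (q : ℕ) then mu (j - 1) + (n - 1 - (j - 1))
      else mu j + (n - 1 - j) := by
    intro j hj
    have h1 := hheq ⟨j, hj⟩
    rw [hσ] at h1
    have h2 := hDval j hj
    rw [← h2]
    exact h1
  have hout : ∀ i, i < a ∨ (q : ℕ) < i → lam i = mu i := by
    intro i hi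
    rcases lt_or_ge i n with hin | hin
    · have := hBD i hin
      rw [if_neg (by omega), if_neg (by omega)] at this
      omega
    · rw [hlamlen i (by omega), hmulen i (by omega)]
  have hsum : lam a + (q : ℕ) = mu (q : ℕ) + a + r := by
    have := hBD a (by omega)
    rw [if_pos rfl] at this
    omega
  have hstep : ∀ i, a ≤ i → i < (q : ℕ) → lam (i + 1) = mu i + 1 := by
    intro i h1 h2
    have := hBD (i + 1) (by omega)
    rw [if_neg (by omega), if_pos ⟨by omega, by omega⟩, show i + 1 - 1 = i from rfl] at this
    omega
  have hne : ∀ i, a ≤ i → i ≤ (q : ℕ) → mu i < lam i := by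
    intro i h1 h2
    rcases eq_or_lt_of_le h1 with h3eq | h3
    · have h5 := hBD a (by omega)
      rw [if_pos rfl] at h5
      rw [← h3eq]
      omega
    · have := hBD i (by omega)
      rw [if_neg (by omega), if_pos ⟨h3, h2⟩] at this
      have h4 := hmu (show i - 1 ≤ i by omega)
      omega
  exact ⟨a, haq, ⟨haq, hout, hne, hstep, hsum⟩, hσ⟩

/-- Let `μ`, `λ` be partitions of length at most `n` and `r > 0`; let
`μ[q]` be `μ` with `r` added to its `q`-th entry and `ρ_n = (n-1, …, 1, 0)`.
Then `λ\μ` is an `r`-ribbon iff for some `q` the sequence `λ + ρ_n` is a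
permutation of `μ[q] + ρ_n`; and in that case the sign of the sorting
permutation is `(-1)^{height(λ\μ)}`. -/
theorem ribbon_iff_sort (n r : ℕ) (hr : 0 < r)
    (mu : ℕ → ℕ) (hmu : IsPartitionFun mu) (hmulen : ∀ i, n ≤ i → mu i = 0)
    (lam : ℕ → ℕ) (hlam : IsPartitionFun lam) (hlamlen : ∀ i, n ≤ i → lam i = 0) :
    (IsRibbon mu lam r ↔
      ∃ q : Fin n, ∃ σ : Equiv.Perm (Fin n), ∀ i : Fin n,
        lam (i : ℕ) + (n - 1 - (i : ℕ)) =
          Function.update mu (q : ℕ) (mu (q : ℕ) + r) ((σ i : ℕ)) + (n - 1 - (σ i : ℕ))) ∧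
    ∀ (q : Fin n) (σ : Equiv.Perm (Fin n)),
      (∀ i : Fin n,
        lam (i : ℕ) + (n - 1 - (i : ℕ)) =
          Function.update mu (q : ℕ) (mu (q : ℕ) + r) ((σ i : ℕ)) + (n - 1 - (σ i : ℕ))) →
      (Equiv.Perm.sign σ : ℤ) = (-1) ^ ribbonHeight mu lam := by
  obtain ⟨hmuA, -⟩ := hmu
  obtain ⟨hlamA, -⟩ := hlam
  refine ⟨⟨?_, ?_⟩, ?_⟩
  · intro hRib
    obtain ⟨a, b, hrr⟩ := isRibbon_ribbonRows n mu lam r hr hmuA hlamA hRib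
    have hbn : b < n := by
      by_contra h
      have := hrr.2.2.1 b hrr.1 le_rfl
      rw [hlamlen b (by omega)] at this
      omega
    exact ⟨⟨b, hbn⟩, cycPerm n a b hrr.1 hbn, ribbonRows_to_perm n r mu lam a b hrr hbn⟩
  · rintro ⟨q, σ, heq⟩
    obtain ⟨a, haq, hrr, -⟩ :=
      perm_to_ribbonRows n r hr mu hmuA hmulen lam hlamA hlamlen q σ heq
    exact ribbonRows_isRibbon mu lam r a (q : ℕ) hrr hmuA
  · intro q σ heq
    obtain ⟨a, haq, hrr, hσ⟩ :=
      perm_to_ribbonRows n r hr mu hmuA hmulen lam hlamA hlamlen q σ heq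
    have hs := sign_cycPerm n ((q : ℕ) - a) a (q : ℕ) haq q.isLt rfl
    rw [hσ, hs]
    have hset : {i | mu i < lam i} = Set.Icc a (q : ℕ) := by
      ext i
      simp only [Set.mem_setOf_eq, Set.mem_Icc]
      constructor
      · intro h
        by_contra hc
        have := hrr.2.1 i (by omega)
        omega
      · intro h
        exact hrr.2.2.1 i h.1 h.2
    rw [ribbonHeight, hset, ← Finset.coe_Icc, Set.ncard_coe_finset, Nat.card_Icc,
      show (q : ℕ) + 1 - a - 1 = (q : ℕ) - a by omega]
    simp
end

section
/- Let X and Y be sets of n and m variables respectively, and let λ be a partition containing the box with coordinates (m+1, n+1) (i.e., λ has more than m parts of size greater than n). Then LS_λ(X;Y) = 0. -/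
open MvPolynomial

/-- The ring of symmetric functions, realized as the polynomial ring
`ℚ[p₁, p₂, …]` in the power sum symmetric functions. The variable indexed by
`k : ℕ+` is the power sum `p_k`. -/
abbrev SymF : Type := MvPolynomial ℕ+ ℚ

/-- The power sum `p_λ` associated to a partition `P` of `n`. -/
noncomputable def pProd {n : ℕ} (P : Nat.Partition n) : SymF :=
  (P.parts.attach.map fun i => (MvPolynomial.X ⟨i.1, P.parts_pos i.2⟩ : SymF)).prod

/-- `z_λ = ∏ i, i^{m_i(λ)} m_i(λ)!` for a partition `P` of `n`. -/
noncomputable def zOf {n : ℕ} (P : Nat.Partition n) : ℚ :=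
  (P.parts.prod : ℚ) * ∏ i ∈ P.parts.toFinset, (Nat.factorial (P.parts.count i) : ℚ)

/-- The `n`-th complete homogeneous symmetric function, expressed in the power
sums via the classical formula `h_n = ∑_{λ ⊢ n} z_λ⁻¹ p_λ`. -/
noncomputable def hSym (n : ℕ) : SymF := ∑ P : Nat.Partition n, (zOf P)⁻¹ • pProd P

/-- `h_k` for `k : ℤ`, with `h_k = 0` for negative `k`. -/
noncomputable def hZ (k : ℤ) : SymF := if 0 ≤ k then hSym k.toNat else 0

/-- The Schur function given by the Jacobi–Trudi determinant
`s_λ = det (h_{λ_i - i + j})_{1 ≤ i,j ≤ l}`. -/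
noncomputable def schurSym (l : ℕ) (lam : ℕ → ℕ) : SymF :=
  Matrix.det (Matrix.of fun i j : Fin l =>
    hZ ((lam (i : ℕ) : ℤ) - ((i : ℕ) : ℤ) + ((j : ℕ) : ℤ)))

/-- The length of a partition given as a function `ℕ → ℕ`. -/
noncomputable def plen (lam : ℕ → ℕ) : ℕ := sInf {N | ∀ i, N ≤ i → lam i = 0}

/-- The Schur function `s_λ` in the ring of symmetric functions. -/
noncomputable def schurF (lam : ℕ → ℕ) : SymF := schurSym (plen lam) lam

/-- The Littlewood–Schur function `LS_λ(X;Y) = ∑_{μ,ν} c^λ_{μν} s_μ(X) s_{ν'}(Y)`,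
obtained from the Schur function `s_λ` by the specialization of the ring of
symmetric functions sending `p_k ↦ p_k(X) + (-1)^{k-1} p_k(Y)`
(i.e. `s_λ(ρ^α_X ∪ ρ^β_Y)`). -/
noncomputable def LSC {a b : ℕ} (lam : ℕ → ℕ) (x : Fin a → ℂ) (y : Fin b → ℂ) : ℂ :=
  MvPolynomial.aeval
    (fun k : ℕ+ => (∑ i, x i ^ (k : ℕ)) + (-1 : ℂ) ^ ((k : ℕ) - 1) * ∑ j, y j ^ (k : ℕ))
    (schurF lam)


open Finset


namespace LSAux

/-- `z` of a multiset of parts. -/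
noncomputable def Zm (s : Multiset ℕ) : ℚ :=
  (s.prod : ℚ) * ∏ i ∈ s.toFinset, (Nat.factorial (s.count i) : ℚ)

lemma fact_prod_cons (k : ℕ) (s : Multiset ℕ) :
    (∏ i ∈ (k ::ₘ s).toFinset, (Nat.factorial ((k ::ₘ s).count i) : ℚ))
      = (s.count k + 1) * ∏ i ∈ s.toFinset, (Nat.factorial (s.count i) : ℚ) := by
  rw [Multiset.toFinset_cons]
  by_cases hk : k ∈ s.toFinset
  · rw [Finset.insert_eq_self.mpr hk,
      ← Finset.mul_prod_erase _ (fun i => (Nat.factorial ((k ::ₘ s).count i) : ℚ)) hk,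
      ← Finset.mul_prod_erase _ (fun i => (Nat.factorial (s.count i) : ℚ)) hk]
    have h2 : ∀ i ∈ s.toFinset.erase k,
        (Nat.factorial ((k ::ₘ s).count i) : ℚ) = (Nat.factorial (s.count i) : ℚ) := by
      intro i hi
      rw [Multiset.count_cons_of_ne (Finset.ne_of_mem_erase hi)]
    rw [Finset.prod_congr rfl h2, Multiset.count_cons_self]
    push_cast [Nat.factorial_succ]
    ring
  · rw [Finset.prod_insert hk, Multiset.count_cons_self]
    have hk0 : s.count k = 0 := by
      rw [Multiset.count_eq_zero]
      exact fun h => hk (Multiset.mem_toFinset.mpr h)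
    have h2 : ∀ i ∈ s.toFinset, (Nat.factorial ((k ::ₘ s).count i) : ℚ)
        = (Nat.factorial (s.count i) : ℚ) := by
      intro i hi
      have : i ≠ k := fun h => hk (h ▸ hi)
      rw [Multiset.count_cons_of_ne this]
    rw [Finset.prod_congr rfl h2, hk0]
    norm_num

lemma Zm_cons (k : ℕ) (s : Multiset ℕ) :
    Zm (k ::ₘ s) = (k * (s.count k + 1) : ℚ) * Zm s := by
  unfold Zm
  rw [Multiset.prod_cons, fact_prod_cons]
  push_cast
  ring

lemma inv_Zm_erase {s : Multiset ℕ} {k : ℕ} (hk : k ∈ s) (hkpos : 0 < k) :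
    ((s.count k * k : ℕ) : ℚ) * (Zm s)⁻¹ = (Zm (s.erase k))⁻¹ := by
  have h1 : Zm s = (k * ((s.erase k).count k + 1) : ℚ) * Zm (s.erase k) := by
    conv_lhs => rw [← Multiset.cons_erase hk]
    exact Zm_cons _ _
  have h2 : s.count k = (s.erase k).count k + 1 := by
    conv_lhs => rw [← Multiset.cons_erase hk]
    exact Multiset.count_cons_self _ _
  rw [h1, h2]
  have ha : ((k : ℚ) * ((s.erase k).count k + 1)) ≠ 0 := by positivity
  have hb : ((((s.erase k).count k + 1) * k : ℕ) : ℚ)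
      = (k : ℚ) * ((s.erase k).count k + 1) := by push_cast; ring
  rw [mul_inv, ← mul_assoc, hb, mul_inv_cancel₀ ha, one_mul]



variable {n m : ℕ}

/-- value of the power sum `p_k` under the specialization. -/
noncomputable def qn (x : Fin n → ℂ) (y : Fin m → ℂ) (k : ℕ) : ℂ :=
  (∑ i, x i ^ k) + (-1 : ℂ) ^ (k - 1) * ∑ j, y j ^ k

/-- value of `h_N` under the specialization. -/
noncomputable def Hc (x : Fin n → ℂ) (y : Fin m → ℂ) (N : ℕ) : ℂ :=
  aeval (fun k : ℕ+ => qn x y (k : ℕ)) (hSym N)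

lemma aeval_pProd (x : Fin n → ℂ) (y : Fin m → ℂ) {N : ℕ} (P : Nat.Partition N) :
    aeval (fun k : ℕ+ => qn x y (k : ℕ)) (pProd P) = (P.parts.map (qn x y)).prod := by
  unfold pProd
  rw [map_multiset_prod, Multiset.map_map]
  conv_rhs => rw [← Multiset.attach_map_val P.parts, Multiset.map_map]
  refine congrArg Multiset.prod (Multiset.map_congr rfl ?_)
  intro i hi
  simp [Function.comp, aeval_X]
  exact aeval_X _ _

lemma Hc_eq (x : Fin n → ℂ) (y : Fin m → ℂ) (N : ℕ) :
    Hc x y N = ∑ P : Nat.Partition N,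
      (((Zm P.parts)⁻¹ : ℚ) : ℂ) * (P.parts.map (qn x y)).prod := by
  unfold Hc hSym
  rw [map_sum]
  refine Finset.sum_congr rfl fun P _ => ?_
  rw [map_smul, aeval_pProd]
  have hz : zOf P = Zm P.parts := rfl
  rw [hz, Rat.smul_def]

lemma Hc_zero (x : Fin n → ℂ) (y : Fin m → ℂ) : Hc x y 0 = 1 := by
  rw [Hc_eq]
  rw [Finset.univ_unique, Finset.sum_singleton]
  have hp : (default : Nat.Partition 0).parts = 0 := rfl
  rw [hp]
  simp [Zm]

lemma newton_Hc (x : Fin n → ℂ) (y : Fin m → ℂ) (N : ℕ) :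
    (N : ℂ) * Hc x y N = ∑ k ∈ Icc 1 N, qn x y k * Hc x y (N - k) := by
  rw [Hc_eq, Finset.mul_sum]
  have lhs_eq : ∀ P : Nat.Partition N,
      (N : ℂ) * ((((Zm P.parts)⁻¹ : ℚ) : ℂ) * (P.parts.map (qn x y)).prod)
      = ∑ k ∈ P.parts.toFinset, ((P.parts.count k * k : ℕ) : ℂ) *
          ((((Zm P.parts)⁻¹ : ℚ) : ℂ) * (P.parts.map (qn x y)).prod) := by
    intro P
    rw [← Finset.sum_mul]
    congr 1
    have h1 : (N : ℕ) = ∑ k ∈ P.parts.toFinset, P.parts.count k * k := by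
      have h := Finset.sum_multiset_map_count P.parts (id : ℕ → ℕ)
      rw [Multiset.map_id] at h
      rw [P.parts_sum] at h
      simpa [smul_eq_mul] using h
    have h1c : (N : ℂ) = ∑ k ∈ P.parts.toFinset, ((P.parts.count k * k : ℕ) : ℂ) := by
      exact_mod_cast h1
    exact h1c
  rw [Finset.sum_congr rfl fun P _ => lhs_eq P]
  -- convert both sides to sigma sums
  rw [Finset.sum_sigma']
  have rhs_eq : ∀ k, qn x y k * Hc x y (N - k)
      = ∑ P : Nat.Partition (N - k),
          qn x y k * ((((Zm P.parts)⁻¹ : ℚ) : ℂ) * (P.parts.map (qn x y)).prod) := by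
    intro k
    rw [Hc_eq, Finset.mul_sum]
  rw [Finset.sum_congr rfl fun k _ => rhs_eq k]
  rw [Finset.sum_sigma']
  refine Finset.sum_bij'
    (i := fun (a : Σ _ : Nat.Partition N, ℕ) (ha : a ∈ _) =>
      (⟨a.2, ⟨a.1.parts.erase a.2,
        fun hi => a.1.parts_pos (Multiset.mem_of_mem_erase hi),
        by
          have ha2 : a.2 ∈ a.1.parts := by
            have := (Finset.mem_sigma.mp ha).2
            exact Multiset.mem_toFinset.mp this
          have hs := a.1.parts_sum
          rw [← Multiset.cons_erase ha2, Multiset.sum_cons] at hs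
          omega⟩⟩ : Σ k : ℕ, Nat.Partition (N - k)))
    (j := fun (b : Σ k : ℕ, Nat.Partition (N - k)) (hb : b ∈ _) =>
      (⟨⟨b.1 ::ₘ b.2.parts,
        fun hi => by
          rcases Multiset.mem_cons.mp hi with h | h
          · subst h
            have := (Finset.mem_sigma.mp hb).1
            have := (Finset.mem_Icc.mp this).1
            omega
          · exact b.2.parts_pos h,
        by
          rw [Multiset.sum_cons, b.2.parts_sum]
          have := (Finset.mem_sigma.mp hb).1
          have := (Finset.mem_Icc.mp this).2
          omega⟩, b.1⟩ : Σ _ : Nat.Partition N, ℕ))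
    ?_ ?_ ?_ ?_ ?_
  · intro a ha
    have ha2 : a.2 ∈ a.1.parts := Multiset.mem_toFinset.mp (Finset.mem_sigma.mp ha).2
    have hs := a.1.parts_sum
    rw [← Multiset.cons_erase ha2, Multiset.sum_cons] at hs
    have hmem : a.2 ∈ Finset.Icc 1 N :=
      Finset.mem_Icc.mpr ⟨a.1.parts_pos ha2, by omega⟩
    exact Finset.mem_sigma.mpr ⟨hmem, Finset.mem_univ _⟩
  · intro b hb
    exact Finset.mem_sigma.mpr
      ⟨Finset.mem_univ _, Multiset.mem_toFinset.mpr (Multiset.mem_cons_self _ _)⟩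
  · intro a ha
    have ha2 : a.2 ∈ a.1.parts := Multiset.mem_toFinset.mp (Finset.mem_sigma.mp ha).2
    refine Sigma.ext ?_ ?_
    · apply Nat.Partition.ext
      simp only
      exact Multiset.cons_erase ha2
    · simp
  · intro b hb
    refine Sigma.ext rfl ?_
    simp only [heq_eq_eq]
    apply Nat.Partition.ext
    simp only
    exact Multiset.erase_cons_head _ _
  · intro a ha
    have ha2 : a.2 ∈ a.1.parts := Multiset.mem_toFinset.mp (Finset.mem_sigma.mp ha).2
    have hpos : 0 < a.2 := a.1.parts_pos ha2
    have hq : ((a.1.parts.count a.2 * a.2 : ℕ) : ℚ) * (Zm a.1.parts)⁻¹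
        = (Zm (a.1.parts.erase a.2))⁻¹ := inv_Zm_erase ha2 hpos
    have hqc : ((a.1.parts.count a.2 * a.2 : ℕ) : ℂ) * (((Zm a.1.parts)⁻¹ : ℚ) : ℂ)
        = (((Zm (a.1.parts.erase a.2))⁻¹ : ℚ) : ℂ) := by
      exact_mod_cast congrArg (fun q : ℚ => (q : ℂ)) hq
    have hprod : (a.1.parts.map (qn x y)).prod
        = qn x y a.2 * ((a.1.parts.erase a.2).map (qn x y)).prod := by
      conv_lhs => rw [← Multiset.cons_erase ha2]
      rw [Multiset.map_cons, Multiset.prod_cons]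
    rw [hprod]
    rw [show ((a.1.parts.count a.2 * a.2 : ℕ) : ℂ) *
        ((((Zm a.1.parts)⁻¹ : ℚ) : ℂ) * (qn x y a.2 * ((a.1.parts.erase a.2).map (qn x y)).prod))
        = (((a.1.parts.count a.2 * a.2 : ℕ) : ℂ) * (((Zm a.1.parts)⁻¹ : ℚ) : ℂ)) *
          (qn x y a.2 * ((a.1.parts.erase a.2).map (qn x y)).prod) from by ring, hqc]
    ring

/-- `h` values indexed by `ℤ`. -/
noncomputable def Hzc (x : Fin n → ℂ) (y : Fin m → ℂ) (M : ℤ) : ℂ :=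
  if 0 ≤ M then Hc x y M.toNat else 0

lemma Hzc_neg (x : Fin n → ℂ) (y : Fin m → ℂ) {M : ℤ} (hM : M < 0) : Hzc x y M = 0 :=
  if_neg (not_le.mpr hM)

lemma Hzc_natCast (x : Fin n → ℂ) (y : Fin m → ℂ) (N : ℕ) :
    Hzc x y (N : ℤ) = Hc x y N := by simp [Hzc]

lemma newton_Hzc (x : Fin n → ℂ) (y : Fin m → ℂ) (M : ℤ) (K : ℕ) (hMK : M ≤ K) :
    (M : ℂ) * Hzc x y M = ∑ k ∈ Icc 1 K, qn x y k * Hzc x y (M - k) := by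
  rcases lt_or_ge M 1 with hM | hM
  · have hL : (M : ℂ) * Hzc x y M = 0 := by
      rcases lt_or_ge M 0 with h | h
      · rw [Hzc_neg x y h, mul_zero]
      · have h0 : M = 0 := by omega
        subst h0
        simp
    rw [hL]
    symm
    apply Finset.sum_eq_zero
    intro k hk
    have h1 : (1 : ℕ) ≤ k := (Finset.mem_Icc.mp hk).1
    rw [Hzc_neg x y (by omega), mul_zero]
  · have hM0 : 0 ≤ M := by omega
    lift M to ℕ using hM0 with N
    have hNK : N ≤ K := by exact_mod_cast hMK
    have hpos : 1 ≤ N := by exact_mod_cast hM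
    · rw [Hzc_natCast]
      rw [← Finset.sum_subset (Finset.Icc_subset_Icc_right hNK) (by
        intro k hk hnk
        have h1 : (1 : ℕ) ≤ k := (Finset.mem_Icc.mp hk).1
        have h2 : ¬ k ≤ N := fun h => hnk (Finset.mem_Icc.mpr ⟨h1, h⟩)
        rw [Hzc_neg x y (by omega), mul_zero])]
      have hterm : ∀ k ∈ Icc 1 N, qn x y k * Hzc x y ((N : ℤ) - k)
          = qn x y k * Hc x y (N - k) := by
        intro k hk
        have h2 : k ≤ N := (Finset.mem_Icc.mp hk).2
        have : ((N : ℤ) - k) = ((N - k : ℕ) : ℤ) := by omega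
        rw [this, Hzc_natCast]
      rw [Finset.sum_congr rfl hterm]
      push_cast
      exact newton_Hc x y N

/-- evaluated elementary symmetric functions. -/
noncomputable def Ec {a : ℕ} (x : Fin a → ℂ) (r : ℕ) : ℂ := eval x (esymm (Fin a) ℂ r)

noncomputable def PXc {a : ℕ} (x : Fin a → ℂ) (k : ℕ) : ℂ := ∑ i, x i ^ k

lemma Ec_zero {a : ℕ} (x : Fin a → ℂ) : Ec x 0 = 1 := by simp [Ec, esymm_zero]

lemma Ec_vanish {a : ℕ} (x : Fin a → ℂ) {r : ℕ} (hr : a < r) : Ec x r = 0 := by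
  unfold Ec esymm
  rw [Finset.powersetCard_eq_empty.mpr (by simpa using hr)]
  simp

lemma newton_Ec {a : ℕ} (x : Fin a → ℂ) (r : ℕ) (hr : 1 ≤ r) :
    (r : ℂ) * Ec x r = ∑ j ∈ Icc 1 r, (-1 : ℂ) ^ (j - 1) * PXc x j * Ec x (r - j) := by
  have h := congrArg (eval x) (mul_esymm_eq_sum (Fin a) ℂ r)
  have hpsum : ∀ k : ℕ, eval x (psum (Fin a) ℂ k) = PXc x k := by
    intro k
    simp [psum, PXc]
  simp only [map_mul, map_pow, map_natCast, map_sum, map_neg, map_one] at h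
  simp only [hpsum] at h
  have hsum : (∑ p ∈ (Finset.HasAntidiagonal.antidiagonal r).filter (fun p => p.1 < r),
        (-1 : ℂ) ^ p.1 * eval x (esymm (Fin a) ℂ p.1) * PXc x p.2)
      = ∑ j ∈ Icc 1 r, (-1 : ℂ) ^ (r - j) * Ec x (r - j) * PXc x j := by
    refine Finset.sum_nbij' (i := fun p => p.2) (j := fun j => (r - j, j)) ?_ ?_ ?_ ?_ ?_
    · intro p hp
      have h1 := Finset.HasAntidiagonal.mem_antidiagonal.mp (Finset.mem_filter.mp hp).1
      have h2 := (Finset.mem_filter.mp hp).2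
      have hmem : p.2 ∈ Icc 1 r := Finset.mem_Icc.mpr ⟨by omega, by omega⟩
      exact hmem
    · intro j hj
      have h1 := Finset.mem_Icc.mp hj
      have hmem : (r - j, j) ∈ (Finset.HasAntidiagonal.antidiagonal r).filter (fun p => p.1 < r) :=
        Finset.mem_filter.mpr ⟨Finset.HasAntidiagonal.mem_antidiagonal.mpr (show r - j + j = r by omega),
          show r - j < r by omega⟩
      exact hmem
    · intro p hp
      have h1 := Finset.HasAntidiagonal.mem_antidiagonal.mp (Finset.mem_filter.mp hp).1
      have h2 := (Finset.mem_filter.mp hp).2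
      have h3 : r - p.2 = p.1 := by omega
      show (r - p.2, p.2) = p
      rw [h3]
    · intro j hj
      rfl
    · intro p hp
      have h1 := Finset.HasAntidiagonal.mem_antidiagonal.mp (Finset.mem_filter.mp hp).1
      have h2 := (Finset.mem_filter.mp hp).2
      show _ = (-1 : ℂ) ^ (r - p.2) * Ec x (r - p.2) * PXc x p.2
      rw [show r - p.2 = p.1 from by omega]
      rfl
  rw [hsum, Finset.mul_sum] at h
  have hterm : ∀ j ∈ Icc 1 r, (-1 : ℂ) ^ (r + 1) * ((-1 : ℂ) ^ (r - j) * Ec x (r - j) * PXc x j)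
      = (-1 : ℂ) ^ (j - 1) * PXc x j * Ec x (r - j) := by
    intro j hj
    have h1 := Finset.mem_Icc.mp hj
    have hsign : (-1 : ℂ) ^ (r + 1) * (-1 : ℂ) ^ (r - j) = (-1 : ℂ) ^ (j - 1) := by
      rw [← pow_add, show (r + 1) + (r - j) = (j - 1) + 2 * (r + 1 - j) by omega,
        pow_add, pow_mul, neg_one_sq, one_pow, mul_one]
    calc (-1 : ℂ) ^ (r + 1) * ((-1 : ℂ) ^ (r - j) * Ec x (r - j) * PXc x j)
        = ((-1 : ℂ) ^ (r + 1) * (-1 : ℂ) ^ (r - j)) * Ec x (r - j) * PXc x j := by ring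
      _ = (-1 : ℂ) ^ (j - 1) * Ec x (r - j) * PXc x j := by rw [hsign]
      _ = (-1 : ℂ) ^ (j - 1) * PXc x j * Ec x (r - j) := by ring
  rw [Finset.sum_congr rfl hterm] at h
  exact h


/-- `e` values indexed by `ℤ`. -/
noncomputable def Ezc {a : ℕ} (x : Fin a → ℂ) (M : ℤ) : ℂ :=
  if 0 ≤ M then Ec x M.toNat else 0

lemma Ezc_neg {a : ℕ} (x : Fin a → ℂ) {M : ℤ} (hM : M < 0) : Ezc x M = 0 :=
  if_neg (not_le.mpr hM)

lemma Ezc_natCast {a : ℕ} (x : Fin a → ℂ) (r : ℕ) : Ezc x (r : ℤ) = Ec x r := by simp [Ezc]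

lemma Ezc_vanish {a : ℕ} (x : Fin a → ℂ) {M : ℤ} (hM : (a : ℤ) < M) : Ezc x M = 0 := by
  have h0 : 0 ≤ M := by omega
  rw [Ezc, if_pos h0]
  exact Ec_vanish x (by omega)

lemma newton_Ezc {a : ℕ} (x : Fin a → ℂ) (M : ℤ) (K : ℕ) (hMK : M ≤ K) :
    (M : ℂ) * Ezc x M = ∑ j ∈ Icc 1 K, (-1 : ℂ) ^ (j - 1) * PXc x j * Ezc x (M - j) := by
  rcases lt_or_ge M 1 with hM | hM
  · have hL : (M : ℂ) * Ezc x M = 0 := by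
      rcases lt_or_ge M 0 with h | h
      · rw [Ezc_neg x h, mul_zero]
      · have h0 : M = 0 := by omega
        subst h0
        simp
    rw [hL]
    symm
    apply Finset.sum_eq_zero
    intro j hj
    have h1 : (1 : ℕ) ≤ j := (Finset.mem_Icc.mp hj).1
    rw [Ezc_neg x (by omega), mul_zero]
  · have hM0 : 0 ≤ M := by omega
    lift M to ℕ using hM0 with r
    have hrK : r ≤ K := by exact_mod_cast hMK
    have hpos : 1 ≤ r := by exact_mod_cast hM
    rw [Ezc_natCast]
    rw [← Finset.sum_subset (Finset.Icc_subset_Icc_right hrK) (by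
      intro j hj hnj
      have h1 : (1 : ℕ) ≤ j := (Finset.mem_Icc.mp hj).1
      have h2 : ¬ j ≤ r := fun h => hnj (Finset.mem_Icc.mpr ⟨h1, h⟩)
      rw [Ezc_neg x (by omega), mul_zero])]
    have hterm : ∀ j ∈ Icc 1 r, (-1 : ℂ) ^ (j - 1) * PXc x j * Ezc x ((r : ℤ) - j)
        = (-1 : ℂ) ^ (j - 1) * PXc x j * Ec x (r - j) := by
      intro j hj
      have h2 : j ≤ r := (Finset.mem_Icc.mp hj).2
      rw [show ((r : ℤ) - j) = ((r - j : ℕ) : ℤ) by omega, Ezc_natCast]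
    rw [Finset.sum_congr rfl hterm]
    push_cast
    exact newton_Ec x r hpos

/-- truncated series `∑ (-1)^r e_r(X) h_{M-r}`. -/
noncomputable def AT (x : Fin n → ℂ) (y : Fin m → ℂ) (T : ℕ) (M : ℤ) : ℂ :=
  ∑ r ∈ Finset.range T, (-1 : ℂ) ^ r * Ezc x (r : ℤ) * Hzc x y (M - r)

noncomputable def Ac (x : Fin n → ℂ) (y : Fin m → ℂ) (M : ℤ) : ℂ := AT x y (n + 1) M

lemma AT_neg (x : Fin n → ℂ) (y : Fin m → ℂ) (T : ℕ) {M : ℤ} (hM : M < 0) :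
    AT x y T M = 0 := by
  apply Finset.sum_eq_zero
  intro r _
  rw [Hzc_neg x y (by omega), mul_zero]

lemma AT_eq (x : Fin n → ℂ) (y : Fin m → ℂ) {T : ℕ} (hT : n + 1 ≤ T) (M : ℤ) :
    AT x y T M = Ac x y M := by
  unfold Ac AT
  symm
  apply Finset.sum_subset (Finset.range_subset_range.mpr hT)
  intro r hr hnr
  have h1 : n < r := by
    by_contra h
    exact hnr (Finset.mem_range.mpr (by omega))
  rw [Ezc_vanish x (by exact_mod_cast h1), mul_zero, zero_mul]

lemma Ac_zero (x : Fin n → ℂ) (y : Fin m → ℂ) : Ac x y 0 = 1 := by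
  unfold Ac AT
  rw [Finset.sum_eq_single 0]
  · rw [pow_zero, one_mul]
    have h1 : Ezc x ((0 : ℕ) : ℤ) = 1 := by rw [Ezc_natCast, Ec_zero]
    have h2 : Hzc x y (0 - ((0 : ℕ) : ℤ)) = 1 := by
      norm_num
      rw [show (0 : ℤ) = ((0 : ℕ) : ℤ) by norm_num, Hzc_natCast, Hc_zero]
    rw [h1, h2, one_mul]
  · intro r _ hr
    rw [Hzc_neg x y (by omega), mul_zero]
  · intro h
    exact absurd (Finset.mem_range.mpr (by omega)) h

lemma Ac_rec (x : Fin n → ℂ) (y : Fin m → ℂ) (N : ℕ) (hN : 1 ≤ N) :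
    (N : ℂ) * Ac x y (N : ℤ) = ∑ k ∈ Icc 1 (N + n + 1),
      (-1 : ℂ) ^ (k - 1) * PXc y k * Ac x y ((N : ℤ) - k) := by
  set T := N + n + 1 with hTdef
  have hTn : n + 1 ≤ T := by omega
  rw [← AT_eq x y hTn]
  rw [show (∑ k ∈ Icc 1 T, (-1 : ℂ) ^ (k - 1) * PXc y k * Ac x y ((N : ℤ) - k))
      = ∑ k ∈ Icc 1 T, (-1 : ℂ) ^ (k - 1) * PXc y k * AT x y T ((N : ℤ) - k) from
    Finset.sum_congr rfl fun k _ => by rw [AT_eq x y hTn]]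
  unfold AT
  rw [Finset.mul_sum]
  have step1 : ∀ r ∈ Finset.range T,
      (N : ℂ) * ((-1 : ℂ) ^ r * Ezc x (r : ℤ) * Hzc x y ((N : ℤ) - r))
      = (-1 : ℂ) ^ r * Ezc x (r : ℤ) * ((((N : ℤ) - r : ℤ) : ℂ) * Hzc x y ((N : ℤ) - r))
        + (-1 : ℂ) ^ r * ((((r : ℕ) : ℤ) : ℂ) * Ezc x (r : ℤ)) * Hzc x y ((N : ℤ) - r) := by
    intro r _
    push_cast
    ring
  rw [Finset.sum_congr rfl step1, Finset.sum_add_distrib]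
  have hS1 : (∑ r ∈ Finset.range T,
        (-1 : ℂ) ^ r * Ezc x (r : ℤ) * ((((N : ℤ) - r : ℤ) : ℂ) * Hzc x y ((N : ℤ) - r)))
      = ∑ k ∈ Icc 1 T, qn x y k *
          ∑ r ∈ Finset.range T, (-1 : ℂ) ^ r * Ezc x (r : ℤ) * Hzc x y ((N : ℤ) - k - r) := by
    have inner : ∀ r ∈ Finset.range T,
        (-1 : ℂ) ^ r * Ezc x (r : ℤ) * ((((N : ℤ) - r : ℤ) : ℂ) * Hzc x y ((N : ℤ) - r))
        = ∑ k ∈ Icc 1 T, qn x y k *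
            ((-1 : ℂ) ^ r * Ezc x (r : ℤ) * Hzc x y ((N : ℤ) - k - r)) := by
      intro r _
      rw [newton_Hzc x y ((N : ℤ) - r) T (by omega), Finset.mul_sum]
      refine Finset.sum_congr rfl fun k _ => ?_
      rw [show (N : ℤ) - r - k = (N : ℤ) - k - r by ring]
      ring
    rw [Finset.sum_congr rfl inner, Finset.sum_comm]
    refine Finset.sum_congr rfl fun k _ => ?_
    rw [Finset.mul_sum]
  have hS2 : (∑ r ∈ Finset.range T,
        (-1 : ℂ) ^ r * ((((r : ℕ) : ℤ) : ℂ) * Ezc x (r : ℤ)) * Hzc x y ((N : ℤ) - r))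
      = ∑ k ∈ Icc 1 T, (-(PXc x k)) *
          ∑ r ∈ Finset.range T, (-1 : ℂ) ^ r * Ezc x (r : ℤ) * Hzc x y ((N : ℤ) - k - r) := by
    have inner : ∀ r ∈ Finset.range T,
        (-1 : ℂ) ^ r * ((((r : ℕ) : ℤ) : ℂ) * Ezc x (r : ℤ)) * Hzc x y ((N : ℤ) - r)
        = ∑ k ∈ Icc 1 T, (-1 : ℂ) ^ (k - 1) * PXc x k *
            ((-1 : ℂ) ^ r * Ezc x ((r : ℤ) - k) * Hzc x y ((N : ℤ) - r)) := by
      intro r hr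
      have hle : ((r : ℕ) : ℤ) ≤ (T : ℕ) := by
        have := Finset.mem_range.mp hr
        omega
      rw [show (-1 : ℂ) ^ r * ((((r : ℕ) : ℤ) : ℂ) * Ezc x (r : ℤ)) * Hzc x y ((N : ℤ) - r)
          = ((((r : ℕ) : ℤ) : ℂ) * Ezc x (r : ℤ)) * ((-1 : ℂ) ^ r * Hzc x y ((N : ℤ) - r))
          from by ring]
      rw [newton_Ezc x ((r : ℕ) : ℤ) T hle, Finset.sum_mul]
      refine Finset.sum_congr rfl fun k _ => ?_
      ring
    rw [Finset.sum_congr rfl inner, Finset.sum_comm]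
    refine Finset.sum_congr rfl fun k hk => ?_
    have hk1 := (Finset.mem_Icc.mp hk).1
    have hk2 := (Finset.mem_Icc.mp hk).2
    have hJ : (∑ r ∈ Finset.range T, (-1 : ℂ) ^ r * Ezc x ((r : ℤ) - k) * Hzc x y ((N : ℤ) - r))
        = (-1 : ℂ) ^ k * AT x y (T - k) ((N : ℤ) - k) := by
      rw [Finset.range_eq_Ico, ← Finset.sum_Ico_consecutive _ (Nat.zero_le k) hk2]
      have hzero : (∑ r ∈ Finset.Ico 0 k, (-1 : ℂ) ^ r * Ezc x ((r : ℤ) - k)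
          * Hzc x y ((N : ℤ) - r)) = 0 := by
        apply Finset.sum_eq_zero
        intro r hr
        have h2 := (Finset.mem_Ico.mp hr).2
        rw [Ezc_neg x (by omega), mul_zero, zero_mul]
      rw [hzero, zero_add, Finset.sum_Ico_eq_sum_range]
      unfold AT
      rw [Finset.mul_sum]
      refine Finset.sum_congr rfl fun s _ => ?_
      rw [show ((k + s : ℕ) : ℤ) - (k : ℤ) = ((s : ℕ) : ℤ) by push_cast; ring,
        show (N : ℤ) - ((k + s : ℕ) : ℤ) = ((N : ℤ) - k) - s by push_cast; ring,
        pow_add]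
      ring
    have hAT : AT x y (T - k) ((N : ℤ) - k) = AT x y T ((N : ℤ) - k) := by
      rcases le_or_gt k N with h | h
      · rw [AT_eq x y (show n + 1 ≤ T - k by omega), AT_eq x y hTn]
      · rw [AT_neg x y _ (by omega), AT_neg x y _ (by omega)]
    have hsign : (-1 : ℂ) ^ (k - 1) * (-1 : ℂ) ^ k = -1 := by
      rw [← pow_add, show (k - 1) + k = 2 * (k - 1) + 1 by omega,
        pow_add, pow_mul, neg_one_sq, one_pow, pow_one, one_mul]
    calc (∑ r ∈ Finset.range T, (-1 : ℂ) ^ (k - 1) * PXc x k *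
            ((-1 : ℂ) ^ r * Ezc x ((r : ℤ) - k) * Hzc x y ((N : ℤ) - r)))
        = (-1 : ℂ) ^ (k - 1) * PXc x k *
            ∑ r ∈ Finset.range T, (-1 : ℂ) ^ r * Ezc x ((r : ℤ) - k)
              * Hzc x y ((N : ℤ) - r) := by rw [Finset.mul_sum]
      _ = (-1 : ℂ) ^ (k - 1) * PXc x k *
            ((-1 : ℂ) ^ k * AT x y T ((N : ℤ) - k)) := by rw [hJ, hAT]
      _ = ((-1 : ℂ) ^ (k - 1) * (-1 : ℂ) ^ k) * PXc x k * AT x y T ((N : ℤ) - k) := by ring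
      _ = (-(PXc x k)) * ∑ r ∈ Finset.range T, (-1 : ℂ) ^ r * Ezc x (r : ℤ)
            * Hzc x y ((N : ℤ) - k - r) := by rw [hsign]; unfold AT; ring
  rw [hS1, hS2, ← Finset.sum_add_distrib]
  refine Finset.sum_congr rfl fun k _ => ?_
  have hq : qn x y k = PXc x k + (-1 : ℂ) ^ (k - 1) * PXc y k := rfl
  rw [hq]
  ring

lemma Ac_neg (x : Fin n → ℂ) (y : Fin m → ℂ) {M : ℤ} (hM : M < 0) : Ac x y M = 0 := by
  unfold Ac
  exact AT_neg x y _ hM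

lemma Ac_eq_Ezc (x : Fin n → ℂ) (y : Fin m → ℂ) : ∀ N : ℕ, Ac x y (N : ℤ) = Ezc y (N : ℤ) := by
  intro N
  induction N using Nat.strong_induction_on with
  | _ N ih =>
    rcases Nat.eq_zero_or_pos N with h0 | hpos
    · subst h0
      rw [show ((0 : ℕ) : ℤ) = (0 : ℤ) by norm_num, Ac_zero, Ezc, if_pos le_rfl]
      rw [show (0 : ℤ).toNat = 0 from rfl, Ec_zero]
    · have h1 := Ac_rec x y N hpos
      have h2 := newton_Ezc y ((N : ℕ) : ℤ) (N + n + 1) (by omega)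
      push_cast at h2
      have hterm : ∀ k ∈ Icc 1 (N + n + 1),
          (-1 : ℂ) ^ (k - 1) * PXc y k * Ac x y ((N : ℤ) - k)
          = (-1 : ℂ) ^ (k - 1) * PXc y k * Ezc y ((N : ℤ) - k) := by
        intro k hk
        have hk1 := (Finset.mem_Icc.mp hk).1
        rcases le_or_gt k N with h | h
        · rw [show (N : ℤ) - k = ((N - k : ℕ) : ℤ) by omega, ih (N - k) (by omega)]
        · rw [Ac_neg x y (by omega), Ezc_neg y (by omega)]
      rw [Finset.sum_congr rfl hterm, ← h2] at h1
      exact mul_left_cancel₀ (show (N : ℂ) ≠ 0 by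
        have : N ≠ 0 := by omega
        exact_mod_cast this) h1

lemma Ac_vanish (x : Fin n → ℂ) (y : Fin m → ℂ) {M : ℤ} (hM : (m : ℤ) < M) :
    Ac x y M = 0 := by
  have h0 : 0 ≤ M := by omega
  lift M to ℕ using h0 with N
  rw [Ac_eq_Ezc, Ezc_vanish y (by exact_mod_cast hM)]

lemma Hzc_rec (x : Fin n → ℂ) (y : Fin m → ℂ) {M : ℤ} (hM : (m : ℤ) < M) :
    Hzc x y M = ∑ r ∈ Finset.range n,
      (-((-1 : ℂ) ^ (r + 1) * Ec x (r + 1))) * Hzc x y (M - (r + 1)) := by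
  have h := Ac_vanish x y hM
  unfold Ac AT at h
  rw [Finset.sum_range_succ'] at h
  have h00 : (-1 : ℂ) ^ 0 * Ezc x ((0 : ℕ) : ℤ) * Hzc x y (M - ((0 : ℕ) : ℤ)) = Hzc x y M := by
    rw [pow_zero, one_mul, Ezc_natCast, Ec_zero, one_mul]
    norm_num
  rw [h00] at h
  have hterm : ∀ r ∈ Finset.range n,
      (-1 : ℂ) ^ (r + 1) * Ezc x (((r + 1 : ℕ)) : ℤ) * Hzc x y (M - ((r + 1 : ℕ) : ℤ))
      = ((-1 : ℂ) ^ (r + 1) * Ec x (r + 1)) * Hzc x y (M - (r + 1)) := by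
    intro r _
    rw [Ezc_natCast]
    push_cast
    ring_nf
  rw [Finset.sum_congr rfl hterm] at h
  have := eq_neg_of_add_eq_zero_right h
  rw [this, ← Finset.sum_neg_distrib]
  refine Finset.sum_congr rfl fun r _ => ?_
  ring

lemma aeval_hZ (x : Fin n → ℂ) (y : Fin m → ℂ) (M : ℤ) :
    aeval (fun k : ℕ+ => qn x y (k : ℕ)) (hZ M) = Hzc x y M := by
  unfold hZ Hzc
  split_ifs with h
  · rfl
  · exact map_zero _

lemma lt_plen_of_ne_zero {lam : ℕ → ℕ} (hlam : IsPartitionFun lam) {j : ℕ}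
    (hj : lam j ≠ 0) : j < plen lam := by
  obtain ⟨N, hN⟩ := hlam.2
  have hmem : plen lam ∈ {N | ∀ i, N ≤ i → lam i = 0} := Nat.sInf_mem ⟨N, hN⟩
  by_contra h
  push_neg at h
  exact hj (hmem j h)

end LSAux

open LSAux Finset

/-- If `X` has `n` variables, `Y` has `m` variables, and the partition `λ`
contains the box `(m+1, n+1)` (i.e. `λ_{n+1} ≥ m+1`), then `LS_λ(X;Y) = 0`. -/
theorem littlewood_schur_vanishes (n m : ℕ) (x : Fin n → ℂ) (y : Fin m → ℂ)
    (lam : ℕ → ℕ) (hlam : IsPartitionFun lam) (hbox : m + 1 ≤ lam n) :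
    LSC lam x y = 0 := by
  classical
  obtain ⟨hanti, hfin⟩ := hlam
  have hln : n + 1 ≤ plen lam := lt_plen_of_ne_zero ⟨hanti, hfin⟩ (by omega)
  set l := plen lam with hldef
  unfold LSC schurF schurSym
  have hfun : (fun k : ℕ+ => (∑ i, x i ^ (k : ℕ)) + (-1 : ℂ) ^ ((k : ℕ) - 1) * ∑ j, y j ^ (k : ℕ))
      = fun k : ℕ+ => qn x y (k : ℕ) := rfl
  rw [hfun]
  set Mat : Matrix (Fin l) (Fin l) SymF := Matrix.of fun i j : Fin l =>
    hZ ((lam (i : ℕ) : ℤ) - ((i : ℕ) : ℤ) + ((j : ℕ) : ℤ)) with hMat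
  set Mc : Matrix (Fin l) (Fin l) ℂ := Matrix.of fun i j : Fin l =>
    Hzc x y ((lam (i : ℕ) : ℤ) - ((i : ℕ) : ℤ) + ((j : ℕ) : ℤ)) with hMc
  have hdet : (aeval fun k : ℕ+ => qn x y (k : ℕ)) Mat.det = Mc.det := by
    rw [AlgHom.map_det]
    congr 1
    ext i j
    exact aeval_hZ x y _
  rw [hdet]
  -- now prove `Mc.det = 0` via a rank argument on the first `n+1` rows
  set g : Fin n → (Fin l → ℂ) := fun r => fun j : Fin l => Hzc x y ((m : ℤ) - r + j) with hg
  set S : Submodule ℂ (Fin l → ℂ) := Submodule.span ℂ (Set.range g) with hS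
  have key : ∀ (d : ℕ) (K : ℤ), (m : ℤ) + 1 - n ≤ K → K ≤ (m : ℤ) + d →
      (fun j : Fin l => Hzc x y (K + j)) ∈ S := by
    intro d
    induction d with
    | zero =>
      intro K hK1 hK2
      have hr : ((m : ℤ) - K).toNat < n := by omega
      have hfn : (fun j : Fin l => Hzc x y (K + j)) = g ⟨((m : ℤ) - K).toNat, hr⟩ := by
        funext j
        have : K + (j : ℤ) = (m : ℤ) - (((m : ℤ) - K).toNat : ℤ) + j := by omega
        rw [hg]
        simp only
        rw [← this]
      rw [hfn]
      exact Submodule.subset_span ⟨_, rfl⟩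
    | succ d ihd =>
      intro K hK1 hK2
      rcases le_or_gt K ((m : ℤ) + d) with h | h
      · exact ihd K hK1 h
      · have hKm : (m : ℤ) < K := by omega
        have hvec : (fun j : Fin l => Hzc x y (K + j))
            = ∑ r ∈ Finset.range n, (-((-1 : ℂ) ^ (r + 1) * Ec x (r + 1))) •
                (fun j : Fin l => Hzc x y ((K - (r + 1)) + j)) := by
          funext j
          rw [Finset.sum_apply]
          have hj0 : (0 : ℤ) ≤ (j : ℤ) := by positivity
          rw [Hzc_rec x y (show (m : ℤ) < K + j by omega)]
          refine Finset.sum_congr rfl fun r _ => ?_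
          simp only [Pi.smul_apply, smul_eq_mul]
          rw [show K + (j : ℤ) - ((r : ℤ) + 1) = (K - ((r : ℤ) + 1)) + j by ring]
        rw [hvec]
        apply Submodule.sum_mem
        intro r hr
        have hrn := Finset.mem_range.mp hr
        apply Submodule.smul_mem
        exact ihd (K - (r + 1)) (by omega) (by omega)
  have hrow : ∀ i : Fin (n + 1), (fun j => Mc (Fin.castLE hln i) j) ∈ S := by
    intro i
    have hi : (i : ℕ) ≤ n := by omega
    have hlami : m + 1 ≤ lam (i : ℕ) := le_trans hbox (hanti hi)
    have hk := key (lam (i : ℕ)) ((lam (i : ℕ) : ℤ) - (i : ℕ)) (by omega) (by omega)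
    have hfn : (fun j : Fin l => Mc (Fin.castLE hln i) j)
        = fun j : Fin l => Hzc x y (((lam (i : ℕ) : ℤ) - (i : ℕ)) + j) := by
      funext j
      rw [hMc]
      simp only [Matrix.of_apply, Fin.coe_castLE]
    rw [hfn]
    exact hk
  have hdep : ¬ LinearIndependent ℂ (fun i : Fin (n + 1) =>
      (fun j => Mc (Fin.castLE hln i) j)) := by
    intro hli
    have hli' : LinearIndependent ℂ (fun i : Fin (n + 1) => (⟨_, hrow i⟩ : S)) :=
      LinearIndependent.of_comp S.subtype hli
    have hfin : FiniteDimensional ℂ S := FiniteDimensional.span_of_finite ℂ (Set.finite_range g)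
    have hcard := hli'.fintype_card_le_finrank
    have hfr : Module.finrank ℂ S ≤ n := by
      have := finrank_range_le_card (R := ℂ) g
      simpa [Set.finrank] using this
    rw [Fintype.card_fin] at hcard
    omega
  obtain ⟨gg, hgsum, i0, hgi0⟩ := Fintype.not_linearIndependent_iff.mp hdep
  set v : Fin l → ℂ := fun j => if hj : (j : ℕ) < n + 1 then gg ⟨j, hj⟩ else 0 with hv
  have hv0 : v ≠ 0 := by
    intro hveq
    apply hgi0
    have h1 := congrFun hveq (Fin.castLE hln i0)
    have h2 : ((Fin.castLE hln i0 : Fin l) : ℕ) < n + 1 := by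
      rw [Fin.coe_castLE]
      omega
    rw [hv] at h1
    simp only [Pi.zero_apply] at h1
    rw [dif_pos h2] at h1
    rw [← h1]
    congr 1
  have hvM : Matrix.vecMul v Mc = 0 := by
    funext j
    show ∑ i : Fin l, v i * Mc i j = 0
    have hres : ∑ i : Fin l, v i * Mc i j
        = ∑ i ∈ (Finset.univ : Finset (Fin (n + 1))).map (Fin.castLEEmb hln),
            v i * Mc i j := by
      symm
      apply Finset.sum_subset (Finset.subset_univ _)
      intro i _ hi
      have hni : ¬ (i : ℕ) < n + 1 := by
        intro hlt
        apply hi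
        rw [Finset.mem_map]
        exact ⟨⟨i, hlt⟩, Finset.mem_univ _, by apply Fin.ext; simp [Fin.castLEEmb]⟩
      rw [hv]
      simp only
      rw [dif_neg hni, zero_mul]
    rw [hres, Finset.sum_map]
    have hterm : ∀ a : Fin (n + 1),
        v (Fin.castLEEmb hln a) * Mc (Fin.castLEEmb hln a) j
        = gg a * Mc (Fin.castLE hln a) j := by
      intro a
      have h2 : ((Fin.castLEEmb hln a : Fin l) : ℕ) < n + 1 := by
        simp [Fin.castLEEmb]
        exact Nat.lt_succ_iff.mp a.isLt
      congr 1
      rw [hv]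
      simp only
      rw [dif_pos h2]
      congr 1
    rw [Finset.sum_congr rfl fun a _ => hterm a]
    have := congrFun hgsum j
    simp only [Finset.sum_apply, Pi.smul_apply, smul_eq_mul, Pi.zero_apply] at this
    exact this
  exact Matrix.exists_vecMul_eq_zero_iff.mp ⟨v, hv0, hvM⟩
end
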